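/- arXiv:1208.2500 — 8 statements merged into one kernel-verified Lean document; each statement's English description precedes it below -/
import Mathlib

section
/- Let m > 1 and let Z_m = { α ∈ F_{q^m} : F_q(α) = F_{q^m} }. For a ∈ F_q, the set V_m(a) = { α ∈ Z_m : X² + aX − α is irreducible over F_{q^m} } is empty if and only if q is even and a = 0. -/
open Polynomial

private lemma aux_dvd_div {d m : ℕ} (hd : d ∣ m) (hne : d ≠ m) (hm : 0 < m) :
    ∃ p : ℕ, p.Prime ∧ p ∣ m ∧ d ∣ m / p := by
  obtain ⟨c, rfl⟩ := hd
  have hc : c ≠ 1 := by rintro rfl; simp at hne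
  obtain ⟨p, hp, hpc⟩ := Nat.exists_prime_and_dvd hc
  obtain ⟨e, rfl⟩ := hpc
  have hp0 : 0 < p := hp.pos
  refine ⟨p, hp, ⟨d * e, by ring⟩, e, ?_⟩
  rw [show d * (p * e) = p * (d * e) by ring, Nat.mul_div_cancel_left _ hp0]

private lemma aux_two_bound {q m : ℕ} (hq : 2 ≤ q) (hm : 2 ≤ m) :
    2 * ∑ p ∈ m.primeFactors, q ^ (m / p) ≤ q ^ m := by
  set t := m / 2 with ht
  have ht1 : 1 ≤ t := by omega
  have htpow : t - 1 < 2 ^ (t - 1) := Nat.lt_two_pow_self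
  have hpow2 : 2 ^ t = 2 * 2 ^ (t - 1) := by
    rw [← pow_succ']; congr 1; omega
  have h2t : 2 * t ≤ 2 ^ t := by omega
  have hm2 : m < 2 ^ (t + 1) := by
    have : 2 ^ (t + 1) = 2 * 2 ^ t := by rw [pow_succ]; ring
    omega
  have hω : m.primeFactors.card ≤ t := by
    have h1 : 2 ^ m.primeFactors.card ≤ m := by
      calc 2 ^ m.primeFactors.card = ∏ _p ∈ m.primeFactors, 2 := by
            rw [Finset.prod_const]
          _ ≤ ∏ p ∈ m.primeFactors, p := by
            apply Finset.prod_le_prod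
            · intros; positivity
            · exact fun p hp => (Nat.prime_of_mem_primeFactors hp).two_le
          _ ≤ m := Nat.le_of_dvd (by omega) (Nat.prod_primeFactors_dvd m)
    have h2 : m.primeFactors.card ≤ Nat.log 2 m :=
      (Nat.le_log_iff_pow_le one_lt_two (by omega)).mpr h1
    have h3 : Nat.log 2 m < t + 1 := Nat.log_lt_of_lt_pow (by omega) hm2
    omega
  have hB : ∑ p ∈ m.primeFactors, q ^ (m / p) ≤ t * q ^ t := by
    calc ∑ p ∈ m.primeFactors, q ^ (m / p) ≤ ∑ _p ∈ m.primeFactors, q ^ t := by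
          apply Finset.sum_le_sum
          intro p hp
          exact Nat.pow_le_pow_right (by omega)
            (Nat.div_le_div_left (Nat.prime_of_mem_primeFactors hp).two_le two_pos)
        _ = m.primeFactors.card * q ^ t := by rw [Finset.sum_const, smul_eq_mul]
        _ ≤ t * q ^ t := Nat.mul_le_mul_right _ hω
  have hqt : 2 * t ≤ q ^ t := le_trans h2t (Nat.pow_le_pow_left hq t)
  calc 2 * ∑ p ∈ m.primeFactors, q ^ (m / p) ≤ 2 * (t * q ^ t) := by omega
    _ = (2 * t) * q ^ t := by ring
    _ ≤ q ^ t * q ^ t := Nat.mul_le_mul_right _ hqt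
    _ = q ^ (t + t) := by rw [pow_add]
    _ ≤ q ^ m := Nat.pow_le_pow_right (by omega) (by omega)

private lemma char_aux {E : Type*} [Field E] [Fintype E] {q m : ℕ} (hm : 0 < m)
    (hE : Fintype.card E = q ^ m) :
    (Even q → CharP E 2) ∧ (¬ Even q → (2 : E) ≠ 0) := by
  haveI := ringChar.charP E
  obtain ⟨n, hp, hcard⟩ := FiniteField.card E (ringChar E)
  rw [hE] at hcard
  constructor
  · intro h2
    have hdvd : (2 : ℕ) ∣ q ^ m := dvd_pow h2.two_dvd (by omega)
    rw [hcard] at hdvd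
    have heq : (2 : ℕ) = ringChar E :=
      (Nat.prime_dvd_prime_iff_eq Nat.prime_two hp).mp (Nat.Prime.dvd_of_dvd_pow Nat.prime_two hdvd)
    exact heq ▸ ringChar.charP E
  · intro h2 hc
    have hdvd : ringChar E ∣ 2 := (CharP.cast_eq_zero_iff E (ringChar E) 2).mp hc
    have heq : ringChar E = 2 := (Nat.prime_dvd_prime_iff_eq hp Nat.prime_two).mp hdvd
    apply h2
    have h2d : (2 : ℕ) ∣ q ^ m := by
      rw [hcard, heq]; exact dvd_pow_self 2 n.pos.ne'
    have := Nat.Prime.dvd_of_dvd_pow Nat.prime_two h2d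
    exact even_iff_two_dvd.mpr this

/-- For `m > 1`, the set `V_m(a) = { α : F_q(α) = F_{q^m}, X² + aX − α irreducible over
F_{q^m} }` is empty iff `q` is even and `a = 0`. -/
theorem Vm_empty_iff (q m : ℕ) (hq : 1 < q) (hm : 1 < m)
    (F : Type*) [Field F] [Fintype F] (hF : Fintype.card F = q)
    (E : Type*) [Field E] [Fintype E] [Algebra F E] (hE : Fintype.card E = q ^ m)
    (a : F) :
    {α : E | IntermediateField.adjoin F {α} = ⊤ ∧
        Irreducible (X ^ 2 + C (algebraMap F E a) * X - C α)} = ∅ ↔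
      (Even q ∧ a = 0) := by
  classical
  have hq0 : 0 < q := by omega
  constructor
  · -- hard direction
    intro hset
    by_contra hna
    have hrank : Module.finrank F E = m := by
      have h := Module.card_eq_pow_finrank (K := F) (V := E)
      rw [hF, hE] at h
      exact (Nat.pow_right_injective hq h.symm)
    set A : E := algebraMap F E a with hA
    set f : E → E := fun x => x ^ 2 + A * x with hf
    -- the special point c
    obtain ⟨c, hc⟩ : ∃ c : E, ∀ x : E, 2 * x = -A → x = c := by
      by_cases hq2 : Even q
      · have ha : a ≠ 0 := fun h => hna ⟨hq2, h⟩
        have hA0 : A ≠ 0 := fun h =>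
          ha ((algebraMap F E).injective (by rw [← hA, h, map_zero]))
        haveI := (char_aux (by omega : 0 < m) hE).1 hq2
        have h2 : (2 : E) = 0 := CharTwo.two_eq_zero
        refine ⟨0, fun x hx => ?_⟩
        rw [h2, zero_mul] at hx
        exact absurd hx.symm (neg_ne_zero.mpr hA0)
      · have h2 : (2 : E) ≠ 0 := (char_aux (by omega : 0 < m) hE).2 hq2
        refine ⟨-A / 2, fun x hx => ?_⟩
        field_simp
        rw [mul_comm] at hx
        exact hx
    -- the image of f
    set I : Finset E := Finset.image f Finset.univ with hI
    have h0I : (0 : E) ∈ I :=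
      Finset.mem_image.mpr ⟨0, Finset.mem_univ _, by simp [hf]⟩
    have hIcard : 2 * I.card ≤ q ^ m + 1 := by
      have hσ : ∀ x : E, f (-A - x) = f x := by intro x; simp only [hf]; ring
      set g : E → ℕ := fun y => (Finset.univ.filter (fun x => f x = y)).card with hg
      have hsum : Finset.univ.card = ∑ y ∈ I, g y :=
        Finset.card_eq_sum_card_fiberwise
          (fun x _ => Finset.mem_image_of_mem f (Finset.mem_univ x))
      have huniv : (Finset.univ : Finset E).card = q ^ m := by rw [Finset.card_univ, hE]
      have hkey : ∀ y ∈ I, y ≠ f c → 2 ≤ g y := by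
        intro y hy hyc
        obtain ⟨x, -, hx⟩ := Finset.mem_image.mp hy
        have hxne : -A - x ≠ x := by
          intro h
          apply hyc
          have h2x : 2 * x = -A := by linear_combination -h
          rw [← hx, hc x h2x]
        exact Finset.one_lt_card.mpr
          ⟨x, Finset.mem_filter.mpr ⟨Finset.mem_univ _, hx⟩,
           -A - x, Finset.mem_filter.mpr ⟨Finset.mem_univ _, by rw [hσ, hx]⟩, hxne.symm⟩
      have hg1 : ∀ y ∈ I, 1 ≤ g y := by
        intro y hy
        obtain ⟨x, -, hx⟩ := Finset.mem_image.mp hy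
        exact Finset.card_pos.mpr ⟨x, Finset.mem_filter.mpr ⟨Finset.mem_univ _, hx⟩⟩
      have hIpos : 1 ≤ I.card := Finset.card_pos.mpr ⟨0, h0I⟩
      by_cases hfc : f c ∈ I
      · have hsplit : g (f c) + ∑ y ∈ I.erase (f c), g y = ∑ y ∈ I, g y :=
          Finset.add_sum_erase I g hfc
        have hbound : (I.erase (f c)).card * 2 ≤ ∑ y ∈ I.erase (f c), g y := by
          simpa using Finset.card_nsmul_le_sum (I.erase (f c)) g 2
            (fun y hy => hkey y (Finset.mem_of_mem_erase hy) (Finset.ne_of_mem_erase hy))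
        have hcard_erase : (I.erase (f c)).card = I.card - 1 := Finset.card_erase_of_mem hfc
        have hgc : 1 ≤ g (f c) := hg1 _ hfc
        rw [huniv] at hsum
        omega
      · have hbound : I.card * 2 ≤ ∑ y ∈ I, g y := by
          simpa using Finset.card_nsmul_le_sum I g 2
            (fun y hy => hkey y hy (fun h => hfc (h ▸ hy)))
        rw [huniv] at hsum
        omega
    -- the set of non-generators
    set S : Finset E :=
      m.primeFactors.biUnion
        (fun p => Finset.univ.filter (fun α : E => α ^ q ^ (m / p) = α)) with hS
    have hScard : S.card ≤ ∑ p ∈ m.primeFactors, q ^ (m / p) := by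
      refine le_trans Finset.card_biUnion_le (Finset.sum_le_sum ?_)
      intro p hp
      have hpm := Nat.mem_primeFactors.mp hp
      have hmp1 : 1 ≤ m / p := (Nat.one_le_div_iff hpm.1.pos).mpr
        (Nat.le_of_dvd (by omega) hpm.2.1)
      set n := q ^ (m / p) with hn
      have hn2 : 2 ≤ n := le_trans hq (by
        calc q = q ^ 1 := (pow_one q).symm
          _ ≤ n := Nat.pow_le_pow_right (by omega) hmp1)
      set P : E[X] := X ^ n - X with hP
      have hPne : P ≠ 0 := fun h => by
        have hco : (0 : E[X]).coeff n = 1 := by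
          rw [← h, hP, coeff_sub, coeff_X_pow, if_pos rfl, coeff_X,
            if_neg (lt_of_lt_of_le one_lt_two hn2).ne, sub_zero]
        simp at hco
      have hdeg : P.natDegree ≤ n := by
        refine le_trans (natDegree_sub_le _ _) ?_
        simp only [natDegree_X_pow, natDegree_X]
        omega
      calc (Finset.univ.filter (fun α : E => α ^ n = α)).card
          ≤ P.roots.toFinset.card := by
            apply Finset.card_le_card
            intro x hx
            rw [Finset.mem_filter] at hx
            rw [Multiset.mem_toFinset, mem_roots hPne]
            simp [hP, IsRoot, hx.2]
        _ ≤ Multiset.card P.roots := Multiset.toFinset_card_le _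
        _ ≤ P.natDegree := P.card_roots'
        _ ≤ n := hdeg
    have h0S : (0 : E) ∈ S := by
      refine Finset.mem_biUnion.mpr ⟨m.minFac, ?_, ?_⟩
      · exact Nat.mem_primeFactors.mpr ⟨Nat.minFac_prime (by omega), m.minFac_dvd, by omega⟩
      · refine Finset.mem_filter.mpr ⟨Finset.mem_univ _, zero_pow ?_⟩
        positivity
    have hsub : ∀ α : E, α ∉ I → α ∈ S := by
      intro α hαI
      have hP2 : (X ^ 2 + C A * X - C α).natDegree = 2 := by compute_degree!
      have hPne : (X ^ 2 + C A * X - C α) ≠ 0 := fun h => by simp [h] at hP2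
      have hirr : Irreducible (X ^ 2 + C A * X - C α) := by
        rw [Polynomial.irreducible_iff_roots_eq_zero_of_degree_le_three hP2.ge
          (hP2.le.trans (by norm_num))]
        rw [Multiset.eq_zero_iff_forall_notMem]
        intro x hx
        rw [Polynomial.mem_roots hPne] at hx
        simp only [IsRoot, eval_sub, eval_add, eval_mul, eval_pow, eval_C, eval_X] at hx
        apply hαI
        refine Finset.mem_image.mpr ⟨x, Finset.mem_univ _, ?_⟩
        simp only [hf]
        linear_combination hx
      have hgen : ¬(IntermediateField.adjoin F {α} = ⊤) := by
        intro htop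
        exact Set.eq_empty_iff_forall_notMem.mp hset α ⟨htop, hirr⟩
      set K := IntermediateField.adjoin F {α} with hK
      set d := Module.finrank F K with hd
      have hdm : d ∣ m := ⟨Module.finrank K E, by rw [hd, Module.finrank_mul_finrank, hrank]⟩
      have hdne : d ≠ m := by
        intro h
        apply hgen
        refine IntermediateField.eq_of_le_of_finrank_eq le_top ?_
        rw [IntermediateField.finrank_top', hrank, ← h]
      obtain ⟨p, hp, hpm, hdvd⟩ := aux_dvd_div hdm hdne (by omega)
      haveI : Fintype K := Fintype.ofFinite K
      have hKcard : Fintype.card K = q ^ d := by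
        rw [Module.card_eq_pow_finrank (K := F) (V := K), hF]
      have hαpow : α ^ q ^ d = α := by
        have h := FiniteField.pow_card (⟨α, IntermediateField.mem_adjoin_simple_self F α⟩ : K)
        rw [hKcard] at h
        simpa using congrArg Subtype.val h
      obtain ⟨j, hj⟩ := hdvd
      have hiter : ∀ n : ℕ, α ^ (q ^ d) ^ n = α := by
        intro n
        induction n with
        | zero => simp
        | succ n ih => rw [pow_succ, pow_mul, ih, hαpow]
      refine Finset.mem_biUnion.mpr
        ⟨p, Nat.mem_primeFactors.mpr ⟨hp, hpm, by omega⟩,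
         Finset.mem_filter.mpr ⟨Finset.mem_univ _, ?_⟩⟩
      rw [hj, pow_mul]
      exact hiter j
    -- conclude via counting
    have hcompl : Finset.univ \ I ⊆ S.erase 0 := by
      intro α hα
      rw [Finset.mem_sdiff] at hα
      refine Finset.mem_erase.mpr ⟨?_, hsub α hα.2⟩
      rintro rfl; exact hα.2 h0I
    have h1 := Finset.card_le_card hcompl
    rw [Finset.card_sdiff_of_subset (Finset.subset_univ I), Finset.card_erase_of_mem h0S,
      Finset.card_univ, hE] at h1
    have h2 := aux_two_bound hq (by omega : 2 ≤ m) (q := q) (m := m)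
    have h3 : I.card ≤ q ^ m := hE ▸ Finset.card_le_univ I
    have hS1 : 1 ≤ S.card := Finset.card_pos.mpr ⟨0, h0S⟩
    have hIpos : 1 ≤ I.card := Finset.card_pos.mpr ⟨0, h0I⟩
    omega
  · -- easy direction
    rintro ⟨hq2, rfl⟩
    rw [Set.eq_empty_iff_forall_notMem]
    rintro α ⟨-, hirr⟩
    haveI : CharP E 2 := (char_aux (by omega : 0 < m) hE).1 hq2
    have hinj : Function.Injective (fun x : E => x * x) := by
      intro x y hxy
      simp only at hxy
      have h2 : (2 : E) = 0 := CharTwo.two_eq_zero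
      have hz : (x - y) * (x - y) = 0 := by
        linear_combination hxy + (y * y - x * y) * h2
      exact sub_eq_zero.mp (mul_self_eq_zero.mp hz)
    obtain ⟨β, hβ⟩ := Finite.injective_iff_surjective.mp hinj α
    have hβ' : β * β = α := hβ
    have h2' : (2 : E[X]) = 0 := by
      rw [← map_ofNat (C : E →+* E[X]) 2, CharTwo.two_eq_zero, map_zero]
    have hfac : X ^ 2 + C (algebraMap F E 0) * X - C α = (X - C β) * (X - C β) := by
      rw [map_zero, C_0, zero_mul, add_zero, ← hβ', map_mul]
      linear_combination (C β * X - C β * C β) * h2'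
    rcases hirr.isUnit_or_isUnit hfac with h | h <;>
    · have hdeg := Polynomial.degree_eq_zero_of_isUnit h
      rw [Polynomial.degree_X_sub_C] at hdeg
      exact one_ne_zero hdeg
end

section
/- Let m,n be positive integers with mn > 1 and let f ∈ F_q[X] be irreducible of degree mn. Suppose f(X) = g₁(X)^m · h₁(X^n / g₁(X)) · (clearing denominators appropriately) = g₂(X)^m · h₂(X^n / g₂(X)), where for i = 1,2, hᵢ is monic of degree m with hᵢ(0) ≠ 0, and gᵢ has degree at most n−1 with gᵢ(0) = 1. Then g₁ = g₂ and h₁ = h₂. -/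
open Polynomial Finset

/-- `g(X)^m · h(X^n / g(X))` with denominators cleared:
`∑_{j=0}^{m} h_j X^{nj} g(X)^{m-j}`. -/
noncomputable def tsrComp {F : Type*} [Field F] (m n : ℕ) (g h : Polynomial F) :
    Polynomial F :=
  ∑ j ∈ Finset.range (m + 1), C (h.coeff j) * X ^ (n * j) * g ^ (m - j)

/-- Per-decomposition facts: existence of `β = α^n / g(α)` with `h` its minimal
polynomial, and `β` fixed by the `m`-th power of the `q`-Frobenius. -/
lemma tsr_aux {F : Type*} [Field F] [Fintype F] {m n : ℕ} (hm : 0 < m) (hn : 0 < n)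
    {g h : Polynomial F} (hh : h.Monic) (hhd : h.natDegree = m) (hh0 : h.coeff 0 ≠ 0)
    (hgd : g.natDegree ≤ n - 1) (hg0 : g.coeff 0 = 1)
    {f : Polynomial F} (hfd : f.natDegree = m * n) (hirr : Irreducible f)
    (hf : f = tsrComp m n g h) :
    ∃ β : AdjoinRoot f, (AdjoinRoot.root f) ^ n = β * (aeval (AdjoinRoot.root f) g)
      ∧ minpoly F β = h ∧ β ≠ 0 ∧ β ^ (Fintype.card F ^ m) = β := by
  haveI : Fact (Irreducible f) := ⟨hirr⟩
  set K := AdjoinRoot f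
  set α : K := AdjoinRoot.root f with hα
  have hf0 : f ≠ 0 := hirr.ne_zero
  haveI : FiniteDimensional F K := Module.Finite.of_basis (AdjoinRoot.powerBasis hf0).basis
  have hrank : Module.finrank F K = m * n := by
    rw [(AdjoinRoot.powerBasis hf0).finrank, AdjoinRoot.powerBasis_dim, hfd]
  have hg : g ≠ 0 := fun hg => by simp [hg] at hg0
  have hgn : g.natDegree < n := lt_of_le_of_lt hgd (Nat.sub_lt hn one_pos)
  -- g(α) ≠ 0
  set u : K := aeval α g with hu
  have hu0 : u ≠ 0 := by
    rw [hu, hα, AdjoinRoot.aeval_eq, Ne, AdjoinRoot.mk_eq_zero]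
    intro hdvd
    have := Polynomial.natDegree_le_of_dvd hdvd hg
    rw [hfd] at this
    have h2 : n ≤ m * n := Nat.le_mul_of_pos_left n hm
    omega
  set β : K := α ^ n * u⁻¹ with hβ
  have hβu : α ^ n = β * u := by rw [hβ, inv_mul_cancel_right₀ hu0]
  -- h(β) = 0
  have hfα : aeval α f = 0 := by rw [hα, AdjoinRoot.aeval_eq, AdjoinRoot.mk_self]
  have hfα' : aeval α (tsrComp m n g h) = 0 := by rw [← hf]; exact hfα
  have hsum : aeval α (tsrComp m n g h) = u ^ m * aeval β h := by
    unfold tsrComp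
    rw [map_sum, Polynomial.aeval_eq_sum_range (p := h) (x := β), hhd, Finset.mul_sum]
    refine Finset.sum_congr rfl fun j hj => ?_
    rw [Finset.mem_range, Nat.lt_succ_iff] at hj
    have hβj : β ^ j * u ^ j = α ^ (n * j) := by rw [← mul_pow, ← hβu, ← pow_mul]
    have e : u ^ (m - j) * u ^ j = u ^ m := by rw [← pow_add]; congr 1; omega
    rw [map_mul, map_mul, aeval_C, map_pow, aeval_X, map_pow, Algebra.smul_def,
      ← hβj, ← e]
    ring
  have hhβ : aeval β h = 0 := by
    have := hsum.symm.trans hfα'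
    rcases mul_eq_zero.mp this with h1 | h1
    · exact absurd h1 (pow_ne_zero _ hu0)
    · exact h1
  have hβ0 : β ≠ 0 := by
    intro h0
    rw [h0] at hhβ
    rw [aeval_def, Polynomial.eval₂_at_zero] at hhβ
    exact hh0 ((algebraMap F K).injective (by rw [hhβ, map_zero]))
  -- minpoly F β = h
  have hβint : IsIntegral F β := IsIntegral.of_finite F β
  have hdvd : minpoly F β ∣ h := minpoly.dvd F β hhβ
  have hdle : (minpoly F β).natDegree ≤ m := by
    have := Polynomial.natDegree_le_of_dvd hdvd hh.ne_zero
    rwa [hhd] at this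
  set L := IntermediateField.adjoin F ({β} : Set K) with hL
  have hLrank : Module.finrank F L = (minpoly F β).natDegree :=
    IntermediateField.adjoin.finrank hβint
  haveI : FiniteDimensional L K := FiniteDimensional.right F L K
  have hαint : IsIntegral L α := IsIntegral.of_finite L α
  have hadjK : Algebra.adjoin F ({α} : Set K) = ⊤ := AdjoinRoot.adjoinRoot_eq_top
  have hLtop : IntermediateField.adjoin L ({α} : Set K) = ⊤ := by
    rw [eq_top_iff]
    intro x _
    have hx : x ∈ Algebra.adjoin F ({α} : Set K) := by rw [hadjK]; trivial
    have hle : Algebra.adjoin F ({α} : Set K) ≤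
        Subalgebra.restrictScalars F (IntermediateField.adjoin L ({α} : Set K)).toSubalgebra := by
      rw [Algebra.adjoin_le_iff]
      rintro y rfl
      exact IntermediateField.subset_adjoin L {α} rfl
    exact hle hx
  set βL : L := IntermediateField.AdjoinSimple.gen F β with hβL
  set Q : Polynomial L := X ^ n - C βL * (g.map (algebraMap F L)) with hQ
  have hQd1 : (C βL * g.map (algebraMap F L)).natDegree < n :=
    lt_of_le_of_lt (le_trans (natDegree_C_mul_le _ _)
      (le_trans natDegree_map_le hgd)) (Nat.sub_lt hn one_pos)
  have hQne : Q ≠ 0 := fun h0 => by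
    have : Q.coeff n = 1 := by
      rw [hQ, coeff_sub, coeff_X_pow, if_pos rfl,
        coeff_eq_zero_of_natDegree_lt hQd1, sub_zero]
    rw [h0, coeff_zero] at this
    exact one_ne_zero this.symm
  have hQdeg : Q.natDegree ≤ n := by
    refine le_trans (natDegree_sub_le _ _) ?_
    simp [natDegree_X_pow, le_of_lt hQd1]
  have hQα : aeval α Q = 0 := by
    have hgen : (algebraMap L K) βL = β := IntermediateField.AdjoinSimple.algebraMap_gen F β
    rw [hQ, map_sub, map_pow, aeval_X, map_mul, aeval_C, aeval_map_algebraMap, hgen,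
      ← hu, ← hβu, sub_self]
  have hdvdQ : minpoly L α ∣ Q := minpoly.dvd L α hQα
  have hminLdeg : (minpoly L α).natDegree ≤ n :=
    le_trans (Polynomial.natDegree_le_of_dvd hdvdQ hQne) hQdeg
  have hfinLK : Module.finrank L K = (minpoly L α).natDegree := by
    have h1 := IntermediateField.adjoin.finrank hαint
    rw [hLtop, IntermediateField.finrank_top'] at h1
    exact h1
  have htower : Module.finrank F L * Module.finrank L K = Module.finrank F K :=
    Module.finrank_mul_finrank F L K
  have hmle : m ≤ (minpoly F β).natDegree := by
    rw [hrank, hLrank, hfinLK] at htower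
    have h2 : m * n ≤ (minpoly F β).natDegree * n := by
      rw [← htower]
      exact Nat.mul_le_mul_left _ hminLdeg
    exact Nat.le_of_mul_le_mul_right h2 hn
  have hd : (minpoly F β).natDegree = m := le_antisymm hdle hmle
  obtain ⟨c, hc⟩ := hdvd
  have hc0 : c ≠ 0 := fun h0 => hh.ne_zero (by rw [hc, h0, mul_zero])
  have hcd : c.natDegree = 0 := by
    have h3 := Polynomial.natDegree_mul (minpoly.ne_zero hβint) hc0
    rw [← hc, hhd, hd] at h3
    omega
  have hc1 : c = 1 := by
    have hlc := congrArg leadingCoeff hc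
    rw [hh.leadingCoeff, leadingCoeff_mul, (minpoly.monic hβint).leadingCoeff, one_mul] at hlc
    rw [Polynomial.eq_C_of_natDegree_eq_zero hcd]
    rw [Polynomial.eq_C_of_natDegree_eq_zero hcd, leadingCoeff_C] at hlc
    rw [← hlc, map_one]
  have hmin : minpoly F β = h := by rw [hc, hc1, mul_one]
  -- β is fixed by the m-th power of Frobenius
  haveI : Finite K := Module.finite_of_finite F
  haveI : Fintype L := Fintype.ofFinite L
  have hcardL : Fintype.card L = Fintype.card F ^ m := by
    rw [Module.card_eq_pow_finrank (K := F) (V := L), hLrank, hd]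
  have hβq : β ^ Fintype.card F ^ m = β := by
    have hβLq : βL ^ Fintype.card L = βL := FiniteField.pow_card βL
    have h4 := congrArg (algebraMap L K) hβLq
    rw [map_pow, IntermediateField.AdjoinSimple.algebraMap_gen, hcardL] at h4
    exact h4
  exact ⟨β, by rw [hβu, hu], hmin, hβ0, hβq⟩

/-- An irreducible polynomial of degree `mn` is uniquely `(m,n)`-decomposable: if
`f = g₁^m h₁(X^n/g₁) = g₂^m h₂(X^n/g₂)` with the `hᵢ` monic of degree `m` with nonzero
constant term and the `gᵢ` of degree at most `n−1` with constant term 1, then `g₁ = g₂`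
and `h₁ = h₂`. -/
theorem unique_decomposition_of_irreducible
    (F : Type*) [Field F] [Fintype F] (m n : ℕ) (hm : 0 < m) (hn : 0 < n)
    (hmn : 1 < m * n)
    (g₁ g₂ h₁ h₂ : Polynomial F)
    (hh₁ : h₁.Monic) (hh₁d : h₁.natDegree = m) (hh₁0 : h₁.coeff 0 ≠ 0)
    (hh₂ : h₂.Monic) (hh₂d : h₂.natDegree = m) (hh₂0 : h₂.coeff 0 ≠ 0)
    (hg₁d : g₁.natDegree ≤ n - 1) (hg₁0 : g₁.coeff 0 = 1)
    (hg₂d : g₂.natDegree ≤ n - 1) (hg₂0 : g₂.coeff 0 = 1)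
    (f : Polynomial F) (hfd : f.natDegree = m * n) (hirr : Irreducible f)
    (hf₁ : f = tsrComp m n g₁ h₁) (hf₂ : f = tsrComp m n g₂ h₂) :
    g₁ = g₂ ∧ h₁ = h₂ := by
  haveI : Fact (Irreducible f) := ⟨hirr⟩
  set K := AdjoinRoot f with hK
  set α : K := AdjoinRoot.root f with hα
  set q := Fintype.card F with hq
  obtain ⟨β₁, hβu₁, hmin₁, hβ0₁, hβq₁⟩ := tsr_aux hm hn hh₁ hh₁d hh₁0 hg₁d hg₁0 hfd hirr hf₁
  obtain ⟨β₂, hβu₂, hmin₂, hβ0₂, hβq₂⟩ := tsr_aux hm hn hh₂ hh₂d hh₂0 hg₂d hg₂0 hfd hirr hf₂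
  have hf0 : f ≠ 0 := hirr.ne_zero
  haveI : FiniteDimensional F K := Module.Finite.of_basis (AdjoinRoot.powerBasis hf0).basis
  have hrank : Module.finrank F K = m * n := by
    rw [(AdjoinRoot.powerBasis hf0).finrank, AdjoinRoot.powerBasis_dim, hfd]
  haveI : Finite K := Module.finite_of_finite F
  haveI : Fintype K := Fintype.ofFinite K
  have hcardK : Fintype.card K = q ^ (m * n) := by
    rw [Module.card_eq_pow_finrank (K := F), hrank]
  have hq1 : 1 < q := Fintype.one_lt_card
  -- characteristic
  set p := ringChar F with hp
  haveI : CharP F p := ringChar.charP F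
  obtain ⟨r, hpprime, hqp⟩ := FiniteField.card F p
  haveI : CharP K p := charP_of_injective_algebraMap (algebraMap F K).injective p
  haveI : Fact p.Prime := ⟨hpprime⟩
  haveI : ExpChar K p := .prime hpprime
  -- Frobenius powers as F-algebra endomorphisms of K
  have halg : ∀ t : ℕ, ∃ τ : K →ₐ[F] K, ∀ x, τ x = x ^ q ^ t := by
    intro t
    refine ⟨AlgHom.mk' (iterateFrobenius K p ((r : ℕ) * t)) ?_, ?_⟩
    · intro c x
      rw [Algebra.smul_def, Algebra.smul_def, map_mul]
      congr 1
      rw [iterateFrobenius_def, ← map_pow]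
      congr 1
      rw [pow_mul, ← hqp]
      exact FiniteField.pow_card_pow t c
    · intro x
      show iterateFrobenius K p ((r : ℕ) * t) x = _
      rw [iterateFrobenius_def, pow_mul, ← hqp]
  -- an F-algebra endomorphism fixing α is the identity
  have hfixall : ∀ τ : K →ₐ[F] K, τ α = α → ∀ x : K, τ x = x := by
    intro τ hτ x
    have hx : x ∈ Algebra.adjoin F ({α} : Set K) := by
      rw [AdjoinRoot.adjoinRoot_eq_top]; trivial
    have hle : Algebra.adjoin F ({α} : Set K) ≤ AlgHom.equalizer τ (AlgHom.id F K) := by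
      rw [Algebra.adjoin_le_iff]
      rintro y rfl
      exact hτ
    exact hle hx
  -- counting: no Frobenius power below mn fixes all of K
  have hcount : ∀ t : ℕ, 0 < t → t < m * n → ¬ (∀ x : K, x ^ q ^ t = x) := by
    intro t ht htlt hall
    set P : Polynomial K := X ^ q ^ t - X with hP
    have hqt1 : 1 < q ^ t := Nat.one_lt_pow ht.ne' hq1
    have hPne : P ≠ 0 := fun h0 => by
      have hco : P.coeff (q ^ t) = 1 := by
        rw [hP, coeff_sub, coeff_X_pow, if_pos rfl, coeff_X, if_neg (by omega), sub_zero]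
      rw [h0, coeff_zero] at hco
      exact one_ne_zero hco.symm
    have hsub : Finset.univ ⊆ P.roots.toFinset := by
      intro x _
      rw [Multiset.mem_toFinset, mem_roots']
      exact ⟨hPne, by rw [IsRoot, hP, eval_sub, eval_pow, eval_X, hall x, sub_self]⟩
    have hcard : Fintype.card K ≤ q ^ t := by
      calc Fintype.card K = Finset.univ.card := Finset.card_univ.symm
        _ ≤ P.roots.toFinset.card := Finset.card_le_card hsub
        _ ≤ Multiset.card P.roots := Multiset.toFinset_card_le _
        _ ≤ P.natDegree := P.card_roots'
        _ ≤ q ^ t := by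
            refine le_trans (natDegree_sub_le _ _) ?_
            simp [natDegree_X_pow, natDegree_X]
            omega
    rw [hcardK] at hcard
    exact absurd hcard (not_le.mpr (Nat.pow_lt_pow_right hq1 htlt))
  -- the q^m Frobenius
  obtain ⟨s, hs⟩ := halg m
  have hsβ₁ : s β₁ = β₁ := by rw [hs]; exact hβq₁
  have hsβ₂ : s β₂ = β₂ := by rw [hs]; exact hβq₂
  set a : ℕ → K := fun k => s^[k] α with ha
  have hinv : ∀ k, (a k) ^ n = β₁ * aeval (a k) g₁ ∧ (a k) ^ n = β₂ * aeval (a k) g₂ := by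
    intro k
    induction k with
    | zero => exact ⟨hβu₁, hβu₂⟩
    | succ k ih =>
      have hstep : a (k + 1) = s (a k) := Function.iterate_succ_apply' s k α
      constructor
      · rw [hstep, ← map_pow, ih.1, map_mul, hsβ₁, ← aeval_algHom_apply]
      · rw [hstep, ← map_pow, ih.2, map_mul, hsβ₂, ← aeval_algHom_apply]
  have hsit : ∀ j (x : K), s^[j] x = x ^ q ^ (m * j) := by
    intro j
    induction j with
    | zero => intro x; simp
    | succ j ihj =>
      intro x
      rw [Function.iterate_succ_apply', ihj, hs, ← pow_mul, ← pow_add, Nat.mul_succ]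
  have hinj : ∀ k l, k < l → l < n → a k ≠ a l := by
    intro k l hkl hln heq
    have hsinj : Function.Injective s := s.toRingHom.injective
    have hiterinj : Function.Injective (s^[k] : K → K) := Function.Injective.iterate hsinj k
    have h6 : s^[l - k] α = α := by
      apply hiterinj
      rw [← Function.iterate_add_apply, (by omega : k + (l - k) = l)]
      exact heq.symm
    obtain ⟨τ, hτ⟩ := halg (m * (l - k))
    have hτα : τ α = α := by rw [hτ, ← hsit (l - k) α]; exact h6
    refine hcount (m * (l - k)) (Nat.mul_pos hm (by omega)) ?_ ?_
    · have h7 : l - k < n := by omega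
      exact (Nat.mul_lt_mul_left hm).mpr h7
    · intro x
      rw [← hτ x]
      exact hfixall τ hτα x
  -- the difference polynomial
  set R : Polynomial K := C β₁ * (g₁.map (algebraMap F K)) - C β₂ * (g₂.map (algebraMap F K))
    with hR
  have hRdeg : R.natDegree < n := by
    have h1 : (C β₁ * g₁.map (algebraMap F K)).natDegree ≤ n - 1 :=
      le_trans (natDegree_C_mul_le _ _) (le_trans natDegree_map_le hg₁d)
    have h2 : (C β₂ * g₂.map (algebraMap F K)).natDegree ≤ n - 1 :=
      le_trans (natDegree_C_mul_le _ _) (le_trans natDegree_map_le hg₂d)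
    have := natDegree_sub_le (C β₁ * g₁.map (algebraMap F K)) (C β₂ * g₂.map (algebraMap F K))
    rw [← hR] at this
    omega
  have hevalmap : ∀ (x : K) (g : Polynomial F),
      eval x (g.map (algebraMap F K)) = aeval x g := by
    intro x g
    rw [aeval_def, eval_map]
  have hRroot : ∀ k, R.IsRoot (a k) := by
    intro k
    rw [IsRoot, hR, eval_sub, eval_mul, eval_mul, eval_C, eval_C, hevalmap, hevalmap,
      ← (hinv k).1, ← (hinv k).2, sub_self]
  have hR0 : R = 0 := by
    by_contra hRne
    have hsub : (Finset.range n).image a ⊆ R.roots.toFinset := by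
      intro x hx
      rw [Finset.mem_image] at hx
      obtain ⟨k, _, rfl⟩ := hx
      rw [Multiset.mem_toFinset, mem_roots']
      exact ⟨hRne, hRroot k⟩
    have hcardim : ((Finset.range n).image a).card = n := by
      rw [Finset.card_image_of_injOn, Finset.card_range]
      intro k hk l hl hkl
      by_contra hne
      rcases Nat.lt_or_ge k l with hlt | hge
      · exact hinj k l hlt (Finset.mem_range.mp hl) hkl
      · exact hinj l k (by omega) (Finset.mem_range.mp hk) hkl.symm
    have hle : n ≤ R.natDegree := by
      calc n = ((Finset.range n).image a).card := hcardim.symm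
        _ ≤ R.roots.toFinset.card := Finset.card_le_card hsub
        _ ≤ Multiset.card R.roots := Multiset.toFinset_card_le _
        _ ≤ R.natDegree := R.card_roots'
    omega
  have hkey : C β₁ * (g₁.map (algebraMap F K)) = C β₂ * (g₂.map (algebraMap F K)) := by
    have := sub_eq_zero.mp (hR ▸ hR0)
    exact this
  have hββ : β₁ = β₂ := by
    have hco := congrArg (fun P : Polynomial K => P.coeff 0) hkey
    simpa [mul_coeff_zero, coeff_map, hg₁0, hg₂0] using hco
  have hgg : g₁ = g₂ := by
    apply Polynomial.map_injective (algebraMap F K) (algebraMap F K).injective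
    rw [hββ] at hkey
    exact mul_left_cancel₀ (by simpa using hβ0₂) hkey
  exact ⟨hgg, by rw [← hmin₁, ← hmin₂, hββ]⟩
end

section
/- Let f ∈ F_q[X] be monic irreducible of degree mn, where m,n ≥ 1. Then over F_{q^m}, f factors into exactly m distinct monic irreducible polynomials, each of degree n. -/
open Polynomial IntermediateField


private lemma pow_iter {K : Type*} [Monoid K] {x : K} {c : ℕ} (h : x ^ c = x) :
    ∀ k : ℕ, 0 < k → x ^ c ^ k = x := by
  intro k hk
  induction k with
  | zero => omega
  | succ k ih =>
    rcases Nat.eq_zero_or_pos k with rfl | hk'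
    · simpa using h
    · rw [pow_succ, pow_mul, ih hk', h]

private lemma key_deg
    (q m n : ℕ) (hq : 1 < q) (hm : 0 < m) (hn : 0 < n)
    (F : Type*) [Field F] [Fintype F] (hF : Fintype.card F = q)
    (E : Type*) [Field E] [Fintype E] [Algebra F E] (hE : Fintype.card E = q ^ m)
    (f : F[X]) (hmonic : f.Monic) (hirr : Irreducible f) (hdeg : f.natDegree = m * n)
    (g : E[X]) (hg : Irreducible g) (hgd : g ∣ f.map (algebraMap F E)) :
    g.natDegree = n := by
  classical
  haveI : Fact (Irreducible g) := ⟨hg⟩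
  set K := AdjoinRoot g with hK
  have hg0 : g ≠ 0 := hg.ne_zero
  haveI : Module.Finite E K := (AdjoinRoot.powerBasis hg0).finite
  haveI : Finite K := Module.finite_of_finite E
  haveI : Fintype K := Fintype.ofFinite K
  set α : K := AdjoinRoot.root g with hα
  -- f vanishes at α
  have hgα : Polynomial.aeval α g = 0 := by
    rw [AdjoinRoot.aeval_eq, AdjoinRoot.mk_self]
  have hfEα : Polynomial.aeval α (f.map (algebraMap F E)) = 0 := by
    obtain ⟨c, hc⟩ := hgd
    rw [hc, map_mul, hgα, zero_mul]
  have hfα : Polynomial.aeval α f = 0 := by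
    rwa [Polynomial.aeval_map_algebraMap] at hfEα
  -- minpoly of α over F is f
  have hmin : minpoly F α = f :=
    (minpoly.eq_of_irreducible_of_monic hirr hfα hmonic).symm
  have hint : IsIntegral F α := IsIntegral.of_finite F α
  -- the intermediate field L = F(α)
  set L : IntermediateField F K := F⟮α⟯ with hL
  have hfinrankL : Module.finrank F L = m * n := by
    rw [hL, IntermediateField.adjoin.finrank hint, hmin, hdeg]
  have hcardL : Fintype.card L = q ^ (m * n) := by
    rw [Module.card_eq_pow_finrank (K := F) (V := L), hF, hfinrankL]
  -- every element of L is a root of X^(q^(m*n)) - X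
  set N : ℕ := q ^ (m * n) with hN
  have hN1 : 1 < N := Nat.one_lt_pow (by positivity : m * n ≠ 0) hq
  set P : K[X] := X ^ N - X with hP
  have hPdeg : P.natDegree = N := by
    rw [hP]
    rw [natDegree_sub_eq_left_of_natDegree_lt] <;>
      simp [natDegree_X_pow, hN1.le, Nat.lt_of_lt_of_le hN1 le_rfl]
  have hP0 : P ≠ 0 := fun h => by simp [h] at hPdeg; omega
  have hrootL : ∀ x : K, x ∈ L → x ∈ P.roots := by
    intro x hx
    have hxN : x ^ N = x := by
      have h1 := FiniteField.pow_card (⟨x, hx⟩ : L)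
      rw [hcardL] at h1
      exact congrArg Subtype.val h1
    rw [mem_roots hP0]
    simp [hP, IsRoot, hxN]
  have hEL : ∀ e : E, algebraMap E K e ∈ L := by
    intro e
    by_contra he
    have heN : (algebraMap E K e) ^ N = algebraMap E K e := by
      have h1 : (algebraMap E K e) ^ (q ^ m) = algebraMap E K e := by
        rw [← map_pow]
        congr 1
        have := FiniteField.pow_card e
        rwa [hE] at this
      have h2 := pow_iter h1 n hn
      rw [hN, pow_mul]; exact h2
    set Lfin : Finset K := (L : Set K).toFinset with hLfin
    have hLcard : Lfin.card = N := by
      rw [hLfin, Set.toFinset_card]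
      simpa using hcardL
    have hmemL : algebraMap E K e ∉ Lfin := by
      simpa [hLfin] using he
    have hsub : (insert (algebraMap E K e) Lfin).val ⊆ P.roots := by
      intro x hx
      rw [Finset.mem_val, Finset.mem_insert] at hx
      rcases hx with rfl | hx
      · rw [mem_roots hP0]; simp [hP, IsRoot, heN]
      · exact hrootL x (by simpa [hLfin] using hx)
    have hle := Polynomial.card_le_degree_of_subset_roots hsub
    rw [Finset.card_insert_of_notMem hmemL, hLcard, hPdeg] at hle
    omega
  have hall : ∀ x : K, x ∈ L := by
    intro x
    obtain ⟨p, rfl⟩ := AdjoinRoot.mk_surjective x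
    rw [← AdjoinRoot.aeval_eq, Polynomial.aeval_eq_sum_range]
    apply sum_mem
    intro i hi
    rw [Algebra.smul_def]
    exact mul_mem (hEL _) (pow_mem (IntermediateField.mem_adjoin_simple_self F α) i)
  have hcards : Fintype.card L = Fintype.card K :=
    Fintype.card_congr (Equiv.subtypeUnivEquiv hall)
  have hfinrankK : Module.finrank E K = g.natDegree := by
    rw [(AdjoinRoot.powerBasis hg0).finrank]
    rfl
  have hcardK : Fintype.card K = q ^ (m * g.natDegree) := by
    rw [Module.card_eq_pow_finrank (K := E) (V := K), hE, hfinrankK, ← pow_mul]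
  rw [hcardL, hcardK] at hcards
  have := Nat.pow_right_injective hq hcards
  exact (Nat.eq_of_mul_eq_mul_left hm this).symm




/-- A monic irreducible polynomial of degree `mn` over `F_q` factors over `F_{q^m}` into
exactly `m` distinct monic irreducible polynomials, each of degree `n`. -/
theorem irreducible_factors_over_extension
    (q m n : ℕ) (hq : 1 < q) (hm : 0 < m) (hn : 0 < n)
    (F : Type*) [Field F] [Fintype F] (hF : Fintype.card F = q)
    (E : Type*) [Field E] [Fintype E] [Algebra F E] (hE : Fintype.card E = q ^ m)
    (f : F[X]) (hmonic : f.Monic) (hirr : Irreducible f) (hdeg : f.natDegree = m * n) :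
    ∃ S : Finset (Polynomial E), S.card = m ∧
      (∀ p ∈ S, p.Monic ∧ Irreducible p ∧ p.natDegree = n) ∧
      f.map (algebraMap F E) = ∏ p ∈ S, p := by
  classical
  set fE := f.map (algebraMap F E) with hfE
  have hmfE : fE.Monic := hmonic.map _
  have hfE0 : fE ≠ 0 := hmfE.ne_zero
  have hsep : f.Separable := PerfectField.separable_of_irreducible hirr
  have hsepE : fE.Separable := hsep.map
  have hsq : Squarefree fE := hsepE.squarefree
  have hnodup : (UniqueFactorizationMonoid.normalizedFactors fE).Nodup :=
    (UniqueFactorizationMonoid.squarefree_iff_nodup_normalizedFactors hfE0).mp hsq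
  set S : Finset E[X] := (UniqueFactorizationMonoid.normalizedFactors fE).toFinset with hS
  have hSval : S.val = UniqueFactorizationMonoid.normalizedFactors fE := by
    rw [hS, Multiset.toFinset_val, Multiset.dedup_eq_self.mpr hnodup]
  have hfac : ∀ p ∈ S, p.Monic ∧ Irreducible p ∧ p.natDegree = n := by
    intro p hp
    rw [hS, Multiset.mem_toFinset] at hp
    have hirr' : Irreducible p := UniqueFactorizationMonoid.irreducible_of_normalized_factor p hp
    have hmon : p.Monic := by
      have h1 := UniqueFactorizationMonoid.normalize_normalized_factor p hp
      rw [← h1]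
      exact Polynomial.monic_normalize hirr'.ne_zero
    have hdvd : p ∣ fE := UniqueFactorizationMonoid.dvd_of_mem_normalizedFactors hp
    exact ⟨hmon, hirr', key_deg q m n hq hm hn F hF E hE f hmonic hirr hdeg p hirr' hdvd⟩
  have hprodval : ∏ p ∈ S, p = S.val.prod := by
    rw [Finset.prod_eq_multiset_prod, Multiset.map_id']
  have hassoc : Associated (∏ p ∈ S, p) fE := by
    rw [hprodval, hSval]
    exact UniqueFactorizationMonoid.prod_normalizedFactors hfE0
  have hmonprod : (∏ p ∈ S, p).Monic :=
    Polynomial.monic_prod_of_monic _ _ fun p hp => (hfac p hp).1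
  have heq : fE = ∏ p ∈ S, p :=
    (Polynomial.eq_of_monic_of_associated hmonprod hmfE hassoc).symm
  refine ⟨S, ?_, hfac, heq⟩
  -- count via degrees
  have hdegE : fE.natDegree = m * n := by
    rw [hfE, Polynomial.natDegree_map_eq_of_injective (algebraMap F E).injective, hdeg]
  have hdegprod : (∏ p ∈ S, p).natDegree = S.card * n := by
    rw [Polynomial.natDegree_prod _ _ fun p hp => (hfac p hp).2.1.ne_zero]
    rw [Finset.sum_congr rfl fun p hp => (hfac p hp).2.2, Finset.sum_const, smul_eq_mul]
  rw [heq, hdegprod] at hdegE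
  exact Nat.eq_of_mul_eq_mul_right hn (by omega)
end

section
/- Let h(Y) ∈ F_q[Y] be monic of degree m with h(0) ≠ 0, let g(X) ∈ F_q[X] have g(0) = 1 and deg g ≤ n−1, and suppose f(X) = g(X)^m h(X^n/g(X)) (clearing denominators) is irreducible over F_q. Then h is irreducible over F_q. -/
open Polynomial Finset

lemma tsrComp_map {F : Type*} [Field F] (n : ℕ) (g p : Polynomial F) (hg : g ≠ 0) :
    algebraMap (Polynomial F) (RatFunc F) (tsrComp p.natDegree n g p) =
      algebraMap (Polynomial F) (RatFunc F) g ^ p.natDegree *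
        Polynomial.aeval
          (algebraMap (Polynomial F) (RatFunc F) X ^ n /
            algebraMap (Polynomial F) (RatFunc F) g) p := by
  set φ := algebraMap (Polynomial F) (RatFunc F)
  have hφg : φ g ≠ 0 := by
    simpa using (map_ne_zero_iff φ (IsFractionRing.injective _ _)).2 hg
  rw [Polynomial.aeval_eq_sum_range, Finset.mul_sum, tsrComp, map_sum]
  refine Finset.sum_congr rfl fun j hj => ?_
  have hjle : j ≤ p.natDegree := Nat.lt_succ_iff.mp (Finset.mem_range.mp hj)
  have hpow : φ g ^ (p.natDegree - j) = φ g ^ p.natDegree / φ g ^ j := by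
    rw [eq_div_iff (pow_ne_zero _ hφg), ← pow_add, Nat.sub_add_cancel hjle]
  have hsmul : (p.coeff j) • ((φ X ^ n / φ g) ^ j) =
      φ (C (p.coeff j)) * ((φ X ^ n / φ g) ^ j) := by
    rw [Algebra.smul_def, IsScalarTower.algebraMap_apply F (Polynomial F) (RatFunc F)]
    rfl
  rw [map_mul, map_mul, map_pow, map_pow, hsmul, hpow, div_pow, ← pow_mul]
  field_simp

lemma tsrComp_mul {F : Type*} [Field F] (n : ℕ) (g a b : Polynomial F) (hg : g ≠ 0)
    (ha : a ≠ 0) (hb : b ≠ 0) :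
    tsrComp (a * b).natDegree n g (a * b) =
      tsrComp a.natDegree n g a * tsrComp b.natDegree n g b := by
  apply IsFractionRing.injective (Polynomial F) (RatFunc F)
  rw [map_mul, tsrComp_map n g _ hg, tsrComp_map n g _ hg, tsrComp_map n g _ hg,
    Polynomial.natDegree_mul ha hb, map_mul, pow_add]
  ring

lemma tsrComp_coeff_top {F : Type*} [Field F] (n : ℕ) (hn : 0 < n) (g p : Polynomial F)
    (hgd : g.natDegree ≤ n - 1) :
    (tsrComp p.natDegree n g p).coeff (n * p.natDegree) = p.leadingCoeff := by
  rw [tsrComp, Finset.sum_range_succ, Nat.sub_self, pow_zero, mul_one, coeff_add,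
    finset_sum_coeff]
  have h0 : ∀ j ∈ Finset.range p.natDegree,
      (C (p.coeff j) * X ^ (n * j) * g ^ (p.natDegree - j)).coeff (n * p.natDegree) = 0 := by
    intro j hj
    have hjlt : j < p.natDegree := Finset.mem_range.mp hj
    apply coeff_eq_zero_of_natDegree_lt
    calc (C (p.coeff j) * X ^ (n * j) * g ^ (p.natDegree - j)).natDegree
        ≤ (C (p.coeff j) * X ^ (n * j)).natDegree + (g ^ (p.natDegree - j)).natDegree :=
          natDegree_mul_le
      _ ≤ n * j + (p.natDegree - j) * (n - 1) := by
          gcongr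
          · exact (natDegree_C_mul_le _ _).trans (by simp)
          · exact natDegree_pow_le.trans (by
              calc (p.natDegree - j) * g.natDegree ≤ (p.natDegree - j) * (n - 1) := by gcongr
                _ = _ := rfl)
      _ < n * p.natDegree := by
          have hd : 1 ≤ p.natDegree - j := by omega
          have h1 : (p.natDegree - j) * (n - 1) + (p.natDegree - j)
              = (p.natDegree - j) * n := by
            rw [← Nat.mul_succ, Nat.succ_eq_add_one, Nat.sub_add_cancel hn]
          have h2 : n * j + (p.natDegree - j) * n = n * p.natDegree := by
            rw [Nat.mul_comm (p.natDegree - j) n, ← Nat.mul_add,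
              Nat.add_sub_cancel' hjlt.le]
          omega
  rw [Finset.sum_eq_zero h0, zero_add, coeff_C_mul, coeff_X_pow, if_pos rfl, mul_one,
    leadingCoeff]

lemma tsrComp_not_unit {F : Type*} [Field F] (n : ℕ) (hn : 0 < n) (g p : Polynomial F)
    (hgd : g.natDegree ≤ n - 1) (hp : p ≠ 0) (hpd : 0 < p.natDegree) :
    ¬ IsUnit (tsrComp p.natDegree n g p) := by
  intro hu
  have hdeg : (tsrComp p.natDegree n g p).natDegree = 0 :=
    natDegree_eq_zero_of_isUnit hu
  have hc : (tsrComp p.natDegree n g p).coeff (n * p.natDegree) ≠ 0 := by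
    rw [tsrComp_coeff_top n hn g p hgd]
    exact leadingCoeff_ne_zero.mpr hp
  have := coeff_eq_zero_of_natDegree_lt (p := tsrComp p.natDegree n g p)
    (n := n * p.natDegree) (by rw [hdeg]; positivity)
  exact hc this

/-- If `f(X) = g(X)^m h(X^n/g(X))` is irreducible over `F_q`, where `h` is monic of
degree `m` with `h(0) ≠ 0` and `g(0) = 1`, `deg g ≤ n−1`, then `h` is irreducible. -/
theorem irreducible_h_of_irreducible_decomposition
    (F : Type*) [Field F] [Fintype F] (m n : ℕ) (hm : 0 < m) (hn : 0 < n)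
    (g h : Polynomial F)
    (hh : h.Monic) (hhd : h.natDegree = m) (hh0 : h.coeff 0 ≠ 0)
    (hgd : g.natDegree ≤ n - 1) (hg0 : g.coeff 0 = 1)
    (hirr : Irreducible (tsrComp m n g h)) :
    Irreducible h := by
  have hg : g ≠ 0 := fun e => by simp [e] at hg0
  have hne : h ≠ 0 := hh.ne_zero
  refine ⟨fun hu => ?_, fun a b hab => ?_⟩
  · have := natDegree_eq_zero_of_isUnit hu
    omega
  · by_contra hcon
    push_neg at hcon
    obtain ⟨hua, hub⟩ := hcon
    have ha : a ≠ 0 := fun e => hne (by simp [hab, e])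
    have hb : b ≠ 0 := fun e => hne (by simp [hab, e])
    have hda : 0 < a.natDegree := by
      rcases Nat.eq_zero_or_pos a.natDegree with h0 | h0
      · exfalso
        apply hua
        rw [eq_C_of_natDegree_eq_zero h0]
        exact isUnit_C.mpr (isUnit_iff_ne_zero.mpr
          (fun e => ha (by rw [eq_C_of_natDegree_eq_zero h0, e, map_zero])))
      · exact h0
    have hdb : 0 < b.natDegree := by
      rcases Nat.eq_zero_or_pos b.natDegree with h0 | h0
      · exfalso
        apply hub
        rw [eq_C_of_natDegree_eq_zero h0]
        exact isUnit_C.mpr (isUnit_iff_ne_zero.mpr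
          (fun e => hb (by rw [eq_C_of_natDegree_eq_zero h0, e, map_zero])))
      · exact h0
    have key : tsrComp m n g h = tsrComp a.natDegree n g a * tsrComp b.natDegree n g b := by
      rw [← hhd, hab]
      exact tsrComp_mul n g a b hg ha hb
    rcases hirr.isUnit_or_isUnit key with hu | hu
    · exact tsrComp_not_unit n hn g a hgd ha hda hu
    · exact tsrComp_not_unit n hn g b hgd hb hdb hu
end

section
/- Let λ ∈ F_{q^m} with F_q(λ) = F_{q^m}, and let g ∈ F_q[X] with g(0) = 1 and deg g ≤ n−1. If X^n − λ·g(X) is irreducible over F_{q^m}, then the product ∏_{i=0}^{m−1} (X^n − λ^{q^i} g(X)) is an irreducible polynomial of degree mn in F_q[X]. -/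
open Polynomial

/-- In a finite extension of a field with `q` elements, any element fixed by
`x ↦ x ^ q` lies in the image of the base field. -/
lemma aux_fixed_mem_range {F E : Type*} [Field F] [Fintype F] [Field E] [Fintype E]
    [Algebra F E] {q : ℕ} (hq : 1 < q) (hF : Fintype.card F = q) {x : E}
    (hx : x ^ q = x) : x ∈ Set.range (algebraMap F E) := by
  classical
  set Q : E[X] := X ^ q - X with hQ
  have hQ0 : Q ≠ 0 := FiniteField.X_pow_card_sub_X_ne_zero E hq
  have hQdeg : Q.natDegree = q := FiniteField.X_pow_card_sub_X_natDegree_eq E hq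
  set s : Finset E := Finset.univ.image (algebraMap F E) with hs
  have hscard : s.card = q := by
    rw [hs, Finset.card_image_of_injective _ (algebraMap F E).injective,
      Finset.card_univ, hF]
  have hroot : ∀ y : E, y ^ q = y → y ∈ Q.roots.toFinset := by
    intro y hy
    rw [Multiset.mem_toFinset, mem_roots hQ0]
    simp [hQ, sub_eq_zero, hy]
  have hsub : s ⊆ Q.roots.toFinset := by
    intro y hy
    rw [hs, Finset.mem_image] at hy
    obtain ⟨a, -, rfl⟩ := hy
    apply hroot
    rw [← map_pow, ← hF, FiniteField.pow_card]
  have hcard : Q.roots.toFinset.card ≤ s.card := by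
    rw [hscard]
    calc Q.roots.toFinset.card ≤ Multiset.card Q.roots := Q.roots.toFinset_card_le
      _ ≤ Q.natDegree := Q.card_roots' 
      _ = q := hQdeg
  have hseq : s = Q.roots.toFinset := Finset.eq_of_subset_of_card_le hsub hcard
  have : x ∈ s := by rw [hseq]; exact hroot x hx
  rw [hs, Finset.mem_image] at this
  obtain ⟨a, -, rfl⟩ := this
  exact ⟨a, rfl⟩

/-- If `λ` generates `F_{q^m}` over `F_q`, `g ∈ F_q[X]` has `g(0) = 1` and
`deg g ≤ n−1`, and `X^n − λ·g(X)` is irreducible over `F_{q^m}`, then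
`∏_{i=0}^{m−1} (X^n − λ^{q^i} g(X))` is (the image of) an irreducible polynomial of
degree `mn` over `F_q`. -/
theorem prod_conjugates_irreducible
    (q m n : ℕ) (hq : 1 < q) (hm : 0 < m) (hn : 0 < n)
    (F : Type*) [Field F] [Fintype F] (hF : Fintype.card F = q)
    (E : Type*) [Field E] [Fintype E] [Algebra F E] (hE : Fintype.card E = q ^ m)
    (lam : E) (hlam : IntermediateField.adjoin F {lam} = ⊤)
    (g : F[X]) (hg0 : g.coeff 0 = 1) (hgd : g.natDegree ≤ n - 1)
    (hirr : Irreducible (X ^ n - C lam * g.map (algebraMap F E))) :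
    ∃ f : F[X], Irreducible f ∧ f.natDegree = m * n ∧
      f.map (algebraMap F E) =
        ∏ i ∈ Finset.range m, (X ^ n - C (lam ^ q ^ i) * g.map (algebraMap F E)) := by
  classical
  set gE : E[X] := g.map (algebraMap F E) with hgE
  set T : ℕ → E[X] := fun i => X ^ n - C (lam ^ q ^ i) * gE with hT
  set P : E[X] := ∏ i ∈ Finset.range m, T i with hP
  -- degrees and monicity of the factors
  have hgEdeg : gE.natDegree ≤ n - 1 := natDegree_map_le.trans hgd
  have hlt : ∀ a : E, (C a * gE).natDegree < n := fun a =>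
    lt_of_le_of_lt ((natDegree_C_mul_le a gE).trans hgEdeg) (Nat.sub_lt hn one_pos)
  have hTmonic : ∀ i, (T i).Monic := by
    intro i
    apply monic_X_pow_sub
    calc (C (lam ^ q ^ i) * gE).degree ≤ ((C (lam ^ q ^ i) * gE).natDegree : WithBot ℕ) :=
          degree_le_natDegree
      _ < (n : WithBot ℕ) := by exact_mod_cast hlt _
  have hTdeg : ∀ i, (T i).natDegree = n := by
    intro i
    rw [hT]
    have : (C (lam ^ q ^ i) * gE).natDegree < (X ^ n : E[X]).natDegree := by
      rw [natDegree_X_pow]; exact hlt _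
    rw [natDegree_sub_eq_left_of_natDegree_lt this, natDegree_X_pow]
  have hPmonic : P.Monic := monic_prod_of_monic _ _ fun i _ => hTmonic i
  have hPdeg : P.natDegree = m * n := by
    rw [hP, natDegree_prod _ _ fun i _ => (hTmonic i).ne_zero]
    simp [hTdeg, Finset.sum_const, mul_comm]
  -- the Frobenius-like map x ↦ x ^ q
  haveI : CharP E (ringChar F) :=
    charP_of_injective_algebraMap (algebraMap F E).injective (ringChar F)
  obtain ⟨s, hp, hqs⟩ := FiniteField.card F (ringChar F)
  rw [hF] at hqs
  haveI : ExpChar E (ringChar F) := ExpChar.prime hp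
  set φ : E →+* E := iterateFrobenius E (ringChar F) s with hφdef
  have hφ : ∀ x : E, φ x = x ^ q := fun x => by
    rw [hφdef, iterateFrobenius_def, ← hqs]
  have hcomp : φ.comp (algebraMap F E) = algebraMap F E := by
    ext a
    rw [RingHom.comp_apply, hφ, ← map_pow, ← hF, FiniteField.pow_card]
  have hgEfix : gE.map φ = gE := by rw [hgE, map_map, hcomp]
  have hlam_pow : lam ^ q ^ m = lam := by
    rw [← hE]; exact FiniteField.pow_card lam
  -- P is fixed by φ
  have hmap : P.map φ = P := by
    rw [hP, Polynomial.map_prod]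
    have h1 : ∀ i ∈ Finset.range m, (T i).map φ = T (i + 1) := by
      intro i _
      rw [hT]
      simp only [Polynomial.map_sub, Polynomial.map_pow, Polynomial.map_X,
        Polynomial.map_mul, map_C, hgEfix, hφ, ← pow_mul, ← pow_succ]
    rw [Finset.prod_congr rfl h1]
    have hT0m : T m = T 0 := by rw [hT]; simp [hlam_pow]
    have e1 := Finset.prod_range_succ' T m
    have e2 := Finset.prod_range_succ T m
    have h2 : (∏ i ∈ Finset.range m, T (i + 1)) * T 0 = (∏ i ∈ Finset.range m, T i) * T 0 := by
      rw [← e1, e2, hT0m]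
    exact mul_right_cancel₀ (hTmonic 0).ne_zero h2
  -- each coefficient of P lies in the image of F
  have hcoeff : ∀ k, P.coeff k ∈ Set.range (algebraMap F E) := by
    intro k
    apply aux_fixed_mem_range hq hF
    have := congrArg (fun r : E[X] => r.coeff k) hmap
    simpa [coeff_map, hφ] using this
  obtain ⟨f, hfmap, -, hfmonic⟩ :=
    lifts_and_degree_eq_and_monic ((lifts_iff_coeff_lifts P).mpr hcoeff) hPmonic
  have hfdeg : f.natDegree = m * n := by
    rw [← hPdeg, ← hfmap, natDegree_map_eq_of_injective (algebraMap F E).injective]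
  -- the adjoin-root field
  set h : E[X] := X ^ n - C lam * gE with hh
  have hT0 : T 0 = h := by rw [hT, hh]; simp
  haveI : Fact (Irreducible h) := ⟨hirr⟩
  set E' := AdjoinRoot h with hE'
  set α : E' := AdjoinRoot.root h with hα
  have hhne : h ≠ 0 := hirr.ne_zero
  have hhdeg : h.natDegree = n := by rw [← hT0]; exact hTdeg 0
  -- finrank data
  haveI : FiniteDimensional E E' :=
    PowerBasis.finite (AdjoinRoot.powerBasis hhne)
  have hfr1 : Module.finrank E E' = n := by
    rw [PowerBasis.finrank (AdjoinRoot.powerBasis hhne)]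
    simpa using hhdeg
  have hfr2 : Module.finrank F E = m := by
    have hc := Module.card_eq_pow_finrank (K := F) (V := E)
    rw [hE, hF] at hc
    exact (Nat.pow_right_injective hq hc.symm)
  haveI : FiniteDimensional F E' := FiniteDimensional.trans F E E'
  have hfr3 : Module.finrank F E' = m * n := by
    rw [← Module.finrank_mul_finrank F E E', hfr1, hfr2]
  -- α is a root of f
  have hdvd : h ∣ P := by
    rw [← hT0, hP]
    exact Finset.dvd_prod_of_mem T (Finset.mem_range.mpr hm)
  have hroot_f : (aeval α) f = 0 := by
    have h1 : (aeval α) f = (aeval α) P := by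
      rw [← hfmap, aeval_map_algebraMap]
    obtain ⟨r, hr⟩ := hdvd
    rw [h1, hr, map_mul]
    have : (aeval α) h = 0 := by
      rw [hα, AdjoinRoot.aeval_eq, AdjoinRoot.mk_self]
    rw [this, zero_mul]
  have hint : IsIntegral F α := IsIntegral.of_finite F α
  -- α generates E' over F
  have hrel : α ^ n = algebraMap E E' lam * (aeval α) g := by
    have h0 : (aeval α) h = 0 := by
      rw [hα, AdjoinRoot.aeval_eq, AdjoinRoot.mk_self]
    have h1 : (aeval α) (X ^ n - C lam * gE) = α ^ n - algebraMap E E' lam * (aeval α) g := by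
      simp only [map_sub, map_pow, aeval_X, map_mul, aeval_C, hgE, aeval_map_algebraMap]
    have h0' : (aeval α) (X ^ n - C lam * gE) = 0 := h0
    exact sub_eq_zero.mp (h1.symm.trans h0')
  have hgα : (aeval α) g ≠ 0 := by
    intro hz
    have hαz : α ^ n = 0 := by rw [hrel, hz, mul_zero]
    have : α = 0 := pow_eq_zero_iff hn.ne' |>.mp hαz
    rw [this] at hz
    rw [show (aeval (0 : E')) g = algebraMap F E' (g.coeff 0) from by
      rw [aeval_def, eval₂_at_zero]] at hz
    rw [hg0, map_one] at hz
    exact one_ne_zero hz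
  set K : IntermediateField F E' := IntermediateField.adjoin F {α} with hK
  have hαK : α ∈ K := IntermediateField.mem_adjoin_simple_self F α
  have hgαK : (aeval α) g ∈ K := by
    have : (aeval α) g ∈ Algebra.adjoin F {α} := by
      rw [Algebra.adjoin_singleton_eq_range_aeval]
      exact ⟨g, rfl⟩
    exact IntermediateField.algebra_adjoin_le_adjoin F {α} this
  have hlamK : algebraMap E E' lam ∈ K := by
    have : algebraMap E E' lam = α ^ n * ((aeval α) g)⁻¹ := by
      rw [hrel, mul_inv_cancel_right₀ hgα]
    rw [this]
    exact mul_mem (pow_mem hαK n) (inv_mem hgαK)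
  have hEK : ∀ e : E, algebraMap E E' e ∈ K := by
    intro e
    have hmem : e ∈ IntermediateField.adjoin F {lam} := by rw [hlam]; trivial
    have himg : algebraMap E E' e ∈
        (IntermediateField.adjoin F {lam}).map (IsScalarTower.toAlgHom F E E') :=
      ⟨e, hmem, rfl⟩
    rw [IntermediateField.adjoin_map] at himg
    have hsingle : (IsScalarTower.toAlgHom F E E') '' {lam} = {algebraMap E E' lam} := by
      simp [Set.image_singleton]
    rw [hsingle] at himg
    have hle : IntermediateField.adjoin F {algebraMap E E' lam} ≤ K := by
      rw [IntermediateField.adjoin_le_iff]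
      intro y hy
      rw [Set.mem_singleton_iff] at hy
      rw [hy]
      exact hlamK
    exact hle himg
  have hKtop : K = ⊤ := by
    rw [eq_top_iff]
    intro x _
    obtain ⟨p, rfl⟩ := AdjoinRoot.mk_surjective x
    rw [← AdjoinRoot.aeval_eq]
    rw [Polynomial.aeval_eq_sum_range]
    apply sum_mem
    intro i _
    rw [Algebra.smul_def]
    exact mul_mem (hEK _) (pow_mem hαK i)
  -- degree of the minimal polynomial
  have hmindeg : (minpoly F α).natDegree = m * n := by
    rw [← IntermediateField.adjoin.finrank hint, ← hK, hKtop,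
      IntermediateField.finrank_top', hfr3]
  have hmindvd : minpoly F α ∣ f := minpoly.dvd F α hroot_f
  have hfeq : f = minpoly F α :=
    eq_of_monic_of_dvd_of_natDegree_le (minpoly.monic hint) hfmonic hmindvd
      (by rw [hfdeg, hmindeg])
  refine ⟨f, ?_, hfdeg, ?_⟩
  · rw [hfeq]; exact minpoly.irreducible hint
  · rw [hfmap, hP]
end

section
/- Let m > 1, a ∈ F_q, and suppose q is odd or a ≠ 0. Then the map h(x) = x² + ax restricted to Z_m = { α ∈ F_{q^m} : F_q(α) = F_{q^m} } is exactly two-to-one; in particular its image has cardinality |Z_m|/2. -/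
/-- If `m > 1`, `a ∈ F_q`, and `q` is odd or `a ≠ 0`, then `x ↦ x² + ax` restricted to
`Z_m = { α ∈ F_{q^m} : F_q(α) = F_{q^m} }` is exactly two-to-one, so its image has
cardinality `|Z_m|/2`. -/
theorem quadratic_map_two_to_one_on_generators
    (q m : ℕ) (hq : 1 < q) (hm : 1 < m)
    (F : Type*) [Field F] [Fintype F] (hF : Fintype.card F = q)
    (E : Type*) [Field E] [Fintype E] [Algebra F E] (hE : Fintype.card E = q ^ m)
    (a : F) (ha : Odd q ∨ a ≠ 0) :
    (∀ β ∈ {α : E | IntermediateField.adjoin F {α} = ⊤},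
      Set.ncard {γ ∈ {α : E | IntermediateField.adjoin F {α} = ⊤} |
        γ ^ 2 + algebraMap F E a * γ = β ^ 2 + algebraMap F E a * β} = 2) ∧
    Set.ncard ((fun x : E => x ^ 2 + algebraMap F E a * x) ''
        {α : E | IntermediateField.adjoin F {α} = ⊤}) =
      Set.ncard {α : E | IntermediateField.adjoin F {α} = ⊤} / 2 := by
  classical
  set c : E := algebraMap F E a with hc
  set Z : Set E := {α : E | IntermediateField.adjoin F {α} = ⊤} with hZ
  set f : E → E := fun x => x ^ 2 + c * x with hf
  obtain ⟨n, hpprime, hcard⟩ := FiniteField.card F (ringChar F)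
  rw [hF] at hcard
  haveI hchE : CharP E (ringChar F) :=
    charP_of_injective_algebraMap (algebraMap F E).injective (ringChar F)
  have hbotne : (⊥ : IntermediateField F E) ≠ ⊤ := by
    intro h
    have hsurj : Function.Surjective (algebraMap F E) := by
      intro x
      have hx : x ∈ (⊥ : IntermediateField F E) := by rw [h]; trivial
      exact IntermediateField.mem_bot.mp hx
    have hcE : Fintype.card F = Fintype.card E :=
      Fintype.card_of_bijective ⟨(algebraMap F E).injective, hsurj⟩
    rw [hF, hE] at hcE
    have : q ^ 1 = q ^ m := by rwa [pow_one]
    have := Nat.pow_right_injective hq this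
    omega
  have key : ∀ β ∈ Z, {γ ∈ Z | f γ = f β} = {β, -c - β} ∧ -c - β ≠ β ∧ -c - β ∈ Z := by
    intro β hβ
    have hpart : IntermediateField.adjoin F {-c - β} = IntermediateField.adjoin F {β} := by
      apply le_antisymm
      · rw [IntermediateField.adjoin_simple_le_iff]
        exact sub_mem (neg_mem (IntermediateField.algebraMap_mem _ a))
          (IntermediateField.mem_adjoin_simple_self F β)
      · rw [IntermediateField.adjoin_simple_le_iff]
        have h' := sub_mem (neg_mem (IntermediateField.algebraMap_mem
          (IntermediateField.adjoin F {-c - β}) a))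
          (IntermediateField.mem_adjoin_simple_self F (-c - β))
        have e : -c - (-c - β) = β := by ring
        rwa [e] at h'
    have hmem : -c - β ∈ Z := by rw [hZ, Set.mem_setOf_eq, hpart]; exact hβ
    have hne : -c - β ≠ β := by
      intro h
      have h2β : β + β = -c := by linear_combination -h
      by_cases h2 : (2 : E) = 0
      · have hc0 : c = 0 := by linear_combination -h2β + (β + c) * h2
        have ha0 : a = 0 := by
          rw [hc] at hc0
          exact (map_eq_zero (algebraMap F E)).mp hc0
        rcases ha with hodd | hane
        · -- char 2 but q odd : contradiction
          have hdvd : ringChar F ∣ 2 := (CharP.cast_eq_zero_iff E (ringChar F) 2).mp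
            (by exact_mod_cast h2)
          have hp2 : ringChar F = 2 := (Nat.prime_dvd_prime_iff_eq hpprime Nat.prime_two).mp hdvd
          rw [hcard, hp2] at hodd
          have : Even (2 ^ (n : ℕ)) := Nat.even_pow.mpr ⟨even_iff_two_dvd.mpr dvd_rfl, n.pos.ne'⟩
          exact (Nat.not_even_iff_odd.mpr hodd) this
        · exact hane ha0
      · have hβbot : β ∈ (⊥ : IntermediateField F E) := by
          have hβeq : β = algebraMap F E (-a / 2) := by
            rw [map_div₀, map_neg, ← hc, map_ofNat, eq_div_iff h2]
            linear_combination h2β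
          rw [hβeq]
          exact IntermediateField.algebraMap_mem _ _
        have hle : IntermediateField.adjoin F {β} ≤ ⊥ :=
          (IntermediateField.adjoin_simple_le_iff).mpr hβbot
        rw [hβ] at hle
        exact hbotne (le_antisymm bot_le hle)
    refine ⟨?_, hne, hmem⟩
    ext γ
    simp only [Set.mem_setOf_eq, Set.mem_insert_iff, Set.mem_singleton_iff]
    constructor
    · rintro ⟨hγZ, hfγ⟩
      have hprod : (γ - β) * (γ + β + c) = 0 := by
        have hfγ' : γ ^ 2 + c * γ = β ^ 2 + c * β := hfγ
        linear_combination hfγ'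
      rcases mul_eq_zero.mp hprod with h | h
      · left; linear_combination h
      · right; linear_combination h
    · rintro (rfl | rfl)
      · exact ⟨hβ, rfl⟩
      · refine ⟨hmem, ?_⟩
        show (-c - β) ^ 2 + c * (-c - β) = β ^ 2 + c * β
        ring
  constructor
  · intro β hβ
    obtain ⟨hset, hne, -⟩ := key β hβ
    show Set.ncard {γ ∈ Z | f γ = f β} = 2
    rw [hset]
    exact Set.ncard_pair hne.symm
  · show Set.ncard (f '' Z) = Set.ncard Z / 2
    have hsum : Z.toFinset.card =
        ∑ b ∈ Z.toFinset.image f, (Z.toFinset.filter fun x => f x = b).card :=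
      Finset.card_eq_sum_card_image f _
    have hfib : ∀ b ∈ Z.toFinset.image f, (Z.toFinset.filter fun x => f x = b).card = 2 := by
      intro b hb
      obtain ⟨β, hβ, rfl⟩ := Finset.mem_image.mp hb
      rw [Set.mem_toFinset] at hβ
      obtain ⟨hset, hne, -⟩ := key β hβ
      have hcoe : ((Z.toFinset.filter fun x => f x = f β : Finset E) : Set E)
          = {γ ∈ Z | f γ = f β} := by
        ext x
        simp [Set.mem_toFinset]
      calc (Z.toFinset.filter fun x => f x = f β).card
          = ((Z.toFinset.filter fun x => f x = f β : Finset E) : Set E).ncard :=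
            (Set.ncard_coe_finset _).symm
        _ = ({γ ∈ Z | f γ = f β} : Set E).ncard := by rw [hcoe]
        _ = 2 := by rw [hset]; exact Set.ncard_pair hne.symm
    rw [Finset.sum_congr rfl hfib, Finset.sum_const, smul_eq_mul] at hsum
    have himg : Set.ncard (f '' Z) = (Z.toFinset.image f).card := by
      rw [Set.ncard_eq_toFinset_card', Set.toFinset_image]
    have hZc : Set.ncard Z = Z.toFinset.card := Set.ncard_eq_toFinset_card' Z
    rw [himg, hZc, hsum]
    omega
end

section
/- Let m = 2^k with k ≥ 1 and let a ∈ F_q with a ≠ 0 if q is even. Then |V_m(a)| = (q^m − q + y₂)/2, where V_m(a) = { α ∈ F_{q^m} : F_q(α) = F_{q^m} and X² + aX − α is irreducible over F_{q^m} }, and y₂ = q − 1 if q is odd and y₂ = q if q is even. -/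
open Polynomial

section CardVmAux
open Finset

private lemma pow_pow_stab {M : Type*} [Monoid M] {x : M} {n : ℕ} (h : x ^ n = x) :
    ∀ t : ℕ, x ^ n ^ t = x
  | 0 => by simp
  | t + 1 => by rw [pow_succ, pow_mul, pow_pow_stab h t, h]

private lemma irred_quad_iff {K : Type*} [Field K] (c α : K) :
    Irreducible (X ^ 2 + C c * X - C α) ↔ ∀ x : K, x ^ 2 + c * x ≠ α := by
  have hm : (X ^ 2 + C c * X - C α).Monic := by monicity!
  have hnd : (X ^ 2 + C c * X - C α).natDegree = 2 := by compute_degree!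
  have h0 : (X ^ 2 + C c * X - C α).coeff 0 = -α := by simp
  have h1 : (X ^ 2 + C c * X - C α).coeff 1 = c := by simp
  constructor
  · intro hirr x hx
    have : ¬Irreducible (X ^ 2 + C c * X - C α) := by
      rw [hm.not_irreducible_iff_exists_add_mul_eq_coeff hnd]
      exact ⟨-x, x + c, by rw [h0]; linear_combination hx, by rw [h1]; ring⟩
    exact this hirr
  · intro h
    by_contra hni
    rw [hm.not_irreducible_iff_exists_add_mul_eq_coeff hnd] at hni
    obtain ⟨c₁, c₂, hc0, hc1⟩ := hni
    rw [h0] at hc0; rw [h1] at hc1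
    exact h (-c₁) (by linear_combination hc0 - c₁ * hc1)

private lemma fiber_eq {E : Type*} [Field E] [Fintype E] [DecidableEq E] {c v r : E}
    (hv : r ^ 2 + c * r = v) :
    Finset.univ.filter (fun x : E => x ^ 2 + c * x = v) = {r, -c - r} := by
  ext x
  simp only [mem_filter, mem_univ, true_and, mem_insert, mem_singleton]
  constructor
  · intro h
    have hz : (x - r) * (x - (-c - r)) = 0 := by linear_combination h - hv
    rcases mul_eq_zero.1 hz with h' | h'
    · exact Or.inl (sub_eq_zero.1 h')
    · exact Or.inr (sub_eq_zero.1 h')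
  · rintro (rfl | rfl)
    · exact hv
    · linear_combination hv

private lemma count_even {E : Type*} [Field E] [Fintype E] (h2 : (2 : E) = 0) {c : E}
    (hc : c ≠ 0) :
    2 * Set.ncard {α : E | ∀ x : E, x ^ 2 + c * x ≠ α} = Fintype.card E := by
  classical
  set φ : E → E := fun x => x ^ 2 + c * x with hφ
  set I : Finset E := Finset.univ.image φ with hI
  have hS : {α : E | ∀ x : E, x ^ 2 + c * x ≠ α} = ↑(Iᶜ) := by
    ext α
    simp [hI, hφ, eq_comm]
  rw [hS, Set.ncard_coe_finset, card_compl]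
  have hsum := Finset.card_eq_sum_card_image φ (Finset.univ : Finset E)
  have hfib : ∀ v ∈ I, (Finset.univ.filter (fun x : E => φ x = v)).card = 2 := by
    intro v hv
    obtain ⟨r, -, rfl⟩ := Finset.mem_image.1 hv
    have heq : Finset.univ.filter (fun x : E => φ x = φ r) = {r, -c - r} := by
      rw [← fiber_eq (show r ^ 2 + c * r = φ r from rfl)]
    have hne : r ≠ -c - r := by
      intro h
      apply hc
      linear_combination h - r * h2
    rw [heq, Finset.card_pair hne]
  rw [Finset.sum_congr rfl hfib, Finset.sum_const, smul_eq_mul, Finset.card_univ] at hsum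
  have hle : I.card ≤ Fintype.card E := by
    simpa using Finset.card_le_univ I
  omega

private lemma count_odd {E : Type*} [Field E] [Fintype E] (h2 : (2 : E) ≠ 0) (c : E) :
    2 * Set.ncard {α : E | ∀ x : E, x ^ 2 + c * x ≠ α} + 1 = Fintype.card E := by
  classical
  set φ : E → E := fun x => x ^ 2 + c * x with hφ
  set I : Finset E := Finset.univ.image φ with hI
  have hS : {α : E | ∀ x : E, x ^ 2 + c * x ≠ α} = ↑(Iᶜ) := by
    ext α
    simp [hI, hφ, eq_comm]
  rw [hS, Set.ncard_coe_finset, card_compl]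
  have hsum := Finset.card_eq_sum_card_image φ (Finset.univ : Finset E)
  set r₀ : E := -(c / 2) with hr₀
  have hv₀ : φ r₀ ∈ I := Finset.mem_image_of_mem φ (Finset.mem_univ r₀)
  have hfib : ∀ v ∈ I.erase (φ r₀), (Finset.univ.filter (fun x : E => φ x = v)).card = 2 := by
    intro v hv
    obtain ⟨hvne, hvI⟩ := Finset.mem_erase.1 hv
    obtain ⟨r, -, rfl⟩ := Finset.mem_image.1 hvI
    have heq : Finset.univ.filter (fun x : E => φ x = φ r) = {r, -c - r} := by
      rw [← fiber_eq (show r ^ 2 + c * r = φ r from rfl)]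
    have hne : r ≠ -c - r := by
      intro h
      apply hvne
      have : r = r₀ := by
        rw [hr₀]
        field_simp
        linear_combination h
      rw [this]
    rw [heq, Finset.card_pair hne]
  have hfib0 : (Finset.univ.filter (fun x : E => φ x = φ r₀)).card = 1 := by
    have heq : Finset.univ.filter (fun x : E => φ x = φ r₀) = {r₀, -c - r₀} := by
      rw [← fiber_eq (show r₀ ^ 2 + c * r₀ = φ r₀ from rfl)]
    have : -c - r₀ = r₀ := by
      rw [hr₀]
      field_simp
      ring
    rw [heq, this]
    simp
  rw [← Finset.add_sum_erase _ _ hv₀, Finset.sum_congr rfl hfib, Finset.sum_const,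
    smul_eq_mul, hfib0, Finset.card_erase_of_mem hv₀, Finset.card_univ] at hsum
  have hle : I.card ≤ Fintype.card E := by simpa using Finset.card_le_univ I
  have hpos : 0 < I.card := Finset.card_pos.2 ⟨φ r₀, hv₀⟩
  omega
private lemma exists_root_of_not_gen (q k : ℕ) (hq : 1 < q) (hk : 1 ≤ k)
    (F : Type*) [Field F] [Fintype F] (hF : Fintype.card F = q)
    (E : Type*) [Field E] [Fintype E] [Algebra F E]
    (hE : Fintype.card E = q ^ 2 ^ k)
    (a : F) (α : E) (hne : IntermediateField.adjoin F {α} ≠ ⊤) :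
    ∃ x : E, x ^ 2 + algebraMap F E a * x = α := by
  classical
  by_contra hcon
  push_neg at hcon
  set a' : E := algebraMap F E a with ha'
  set P : E[X] := X ^ 2 + C a' * X - C α with hP
  have hirr : Irreducible P := (irred_quad_iff a' α).2 hcon
  -- the exponent Q
  set Q : ℕ := q ^ 2 ^ (k - 1) with hQdef
  have hQ2 : Q * Q = q ^ 2 ^ k := by
    rw [hQdef, ← pow_add]
    congr 1
    have h1 : 2 ^ (k - 1) + 2 ^ (k - 1) = 2 ^ (k - 1 + 1) := by ring
    rw [h1, Nat.sub_add_cancel hk]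
  have hQpos : 2 ≤ Q := le_trans hq (Nat.le_self_pow (by positivity) q)
  -- finrank facts
  have hrankE : Module.finrank F E = 2 ^ k := by
    have h := Module.card_eq_pow_finrank (K := F) (V := E)
    rw [hF, hE] at h
    exact Nat.pow_right_injective hq h.symm
  set L := IntermediateField.adjoin F {α} with hL
  haveI : Fintype L := Fintype.ofFinite L
  have hmem : α ∈ L := IntermediateField.mem_adjoin_simple_self F α
  have hdvd : Module.finrank F ↥L ∣ 2 ^ k :=
    ⟨Module.finrank ↥L E, by rw [← hrankE, Module.finrank_mul_finrank]⟩
  have hneq : Module.finrank F ↥L ≠ 2 ^ k := by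
    intro h
    apply hne
    apply IntermediateField.eq_of_le_of_finrank_eq le_top
    rw [h, IntermediateField.finrank_top', hrankE]
  obtain ⟨j, hjk, hjd⟩ := (Nat.dvd_prime_pow Nat.prime_two).1 hdvd
  have hjk' : j ≤ k - 1 := by
    rcases Nat.lt_or_ge j k with h | h
    · omega
    · exfalso; apply hneq; rw [hjd]; congr 1; omega
  have hcardL : Fintype.card L = q ^ Module.finrank F ↥L := by
    rw [Module.card_eq_pow_finrank (K := F) (V := L), hF]
  have hαL : α ^ q ^ Module.finrank F ↥L = α := by
    have h1 := FiniteField.pow_card (⟨α, hmem⟩ : L)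
    rw [hcardL] at h1
    have h2 := congrArg Subtype.val h1
    push_cast at h2
    exact h2
  have hαQ : α ^ Q = α := by
    obtain ⟨t, ht⟩ : Module.finrank F ↥L ∣ 2 ^ (k - 1) := by
      rw [hjd]; exact pow_dvd_pow 2 hjk'
    rw [hQdef, ht, pow_mul]
    exact pow_pow_stab hαL t
  have haQ : a' ^ Q = a' := by
    have h1 : a' ^ q = a' := by
      rw [ha', ← map_pow, ← hF, FiniteField.pow_card]
    rw [hQdef]
    exact pow_pow_stab h1 _
  -- characteristic
  set p₀ := ringChar F with hp₀
  obtain ⟨n, hp₀prime, hqcard⟩ := FiniteField.card F p₀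
  rw [hF] at hqcard
  haveI : Fact p₀.Prime := ⟨hp₀prime⟩
  haveI : CharP E p₀ := charP_of_injective_algebraMap (algebraMap F E).injective p₀
  haveI : Fact (Irreducible P) := ⟨hirr⟩
  haveI : CharP (AdjoinRoot P) p₀ :=
    charP_of_injective_ringHom (AdjoinRoot.of P).injective p₀
  set t : ℕ := n * 2 ^ (k - 1) with htdef
  have hQp : Q = p₀ ^ t := by rw [hQdef, hqcard, htdef, pow_mul]
  set β : AdjoinRoot P := AdjoinRoot.root P with hβdef
  set c : AdjoinRoot P := AdjoinRoot.of P a' with hcdef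
  set o : AdjoinRoot P := AdjoinRoot.of P α with hodef
  have hβ : β ^ 2 + c * β = o := by
    have h0 := AdjoinRoot.eval₂_root P
    rw [hP] at h0
    simp only [eval₂_sub, eval₂_add, eval₂_mul, eval₂_pow, eval₂_X, eval₂_C] at h0
    linear_combination h0
  have hcQ : c ^ Q = c := by rw [hcdef, ← map_pow, haQ]
  have hoQ : o ^ Q = o := by rw [hodef, ← map_pow, hαQ]
  set γ : AdjoinRoot P := β ^ Q with hγ
  have hγroot : γ ^ 2 + c * γ = o := by
    calc γ ^ 2 + c * γ = (β ^ 2) ^ Q + (c * β) ^ Q := by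
          rw [hγ, mul_pow, hcQ]; ring
      _ = (β ^ 2 + c * β) ^ Q := by
          rw [hQp]; exact (add_pow_char_pow _ _ p₀ t).symm
      _ = o ^ Q := by rw [hβ]
      _ = o := hoQ
  have hfact : (γ - β) * (γ + β + c) = 0 := by linear_combination hγroot - hβ
  have hβQQ : β ^ (Q * Q) = β := by
    rw [pow_mul]
    rcases mul_eq_zero.1 hfact with h | h
    · have hγβ : γ = β := sub_eq_zero.1 h
      have h1 : β ^ Q = β := by rw [← hγ]; exact hγβ
      rw [h1, h1]
    · have hpow : (γ + β + c) ^ Q = γ ^ Q + β ^ Q + c ^ Q := by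
        rw [hQp, add_pow_char_pow _ _ p₀ t, add_pow_char_pow _ _ p₀ t]
      rw [h, zero_pow (by omega : Q ≠ 0)] at hpow
      have hgoal : γ ^ Q = β := by linear_combination -hpow - h + hγ - hcQ
      rw [← hγ]
      exact hgoal
  -- counting roots of X^(Q*Q) - X
  have hNcard : Fintype.card E = Q * Q := by rw [hE, hQ2]
  set g : (AdjoinRoot P)[X] := X ^ (Q * Q) - X with hg
  have hQQ1 : 1 < Q * Q := by nlinarith
  have hgne : g ≠ 0 := by
    intro h0
    have h1 : g.coeff (Q * Q) = 1 := by
      rw [hg, coeff_sub, coeff_X_pow, if_pos rfl, coeff_X, if_neg (by omega), sub_zero]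
    rw [h0] at h1
    simp at h1
  have hrootE : ∀ x : E, (AdjoinRoot.of P x) ∈ g.roots := by
    intro x
    rw [mem_roots hgne]
    have hx : x ^ (Q * Q) = x := by rw [← hNcard]; exact FiniteField.pow_card x
    simp only [hg, IsRoot, eval_sub, eval_pow, eval_X]
    rw [← map_pow, hx, sub_self]
  have hrootβ : β ∈ g.roots := by
    rw [mem_roots hgne]
    simp only [hg, IsRoot, eval_sub, eval_pow, eval_X]
    rw [hβQQ, sub_self]
  have hβnotim : ∀ x : E, AdjoinRoot.of P x ≠ β := by
    intro x hx
    apply hcon x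
    apply (AdjoinRoot.of P).injective
    rw [map_add, map_mul, map_pow, hx]
    exact hβ
  set T : Finset (AdjoinRoot P) :=
    Finset.univ.image (fun x : E => AdjoinRoot.of P x) with hT
  have hsub : insert β T ⊆ g.roots.toFinset := by
    intro y hy
    rw [Multiset.mem_toFinset]
    rcases Finset.mem_insert.1 hy with rfl | hy'
    · exact hrootβ
    · obtain ⟨x, -, rfl⟩ := Finset.mem_image.1 hy'
      exact hrootE x
  have hcardT : T.card = Q * Q := by
    rw [hT, Finset.card_image_of_injective _ (AdjoinRoot.of P).injective,
      Finset.card_univ, hNcard]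
  have hcardins : (insert β T).card = Q * Q + 1 := by
    rw [Finset.card_insert_of_notMem, hcardT]
    rw [hT]
    simp only [Finset.mem_image, Finset.mem_univ, true_and, not_exists]
    exact hβnotim
  have h5 := Finset.card_le_card hsub
  have h6 := Multiset.toFinset_card_le g.roots
  have h7 := g.card_roots'
  have h8 : g.natDegree ≤ Q * Q := by
    rw [hg]
    refine le_trans (natDegree_sub_le _ _) ?_
    simp only [natDegree_X_pow, natDegree_X]
    omega
  omega

end CardVmAux

/-- For `m = 2^k`, `k ≥ 1`, and `a ∈ F_q` with `a ≠ 0` if `q` is even,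
`|V_m(a)| = (q^m − q + y₂)/2` where `y₂ = q − 1` for `q` odd and `y₂ = q` for `q`
even. -/
theorem card_Vm_pow_two
    (q k : ℕ) (hq : 1 < q) (hk : 1 ≤ k)
    (F : Type*) [Field F] [Fintype F] (hF : Fintype.card F = q)
    (E : Type*) [Field E] [Fintype E] [Algebra F E]
    (hE : Fintype.card E = q ^ (2 ^ k))
    (a : F) (ha : Odd q ∨ a ≠ 0) :
    2 * Set.ncard {α : E | IntermediateField.adjoin F {α} = ⊤ ∧
        Irreducible (X ^ 2 + C (algebraMap F E a) * X - C α)} =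
      q ^ (2 ^ k) - q + (if Odd q then q - 1 else q) := by
  classical
  set a' : E := algebraMap F E a with ha'
  have hset : {α : E | IntermediateField.adjoin F {α} = ⊤ ∧
      Irreducible (X ^ 2 + C (algebraMap F E a) * X - C α)} =
      {α : E | ∀ x : E, x ^ 2 + a' * x ≠ α} := by
    ext α
    simp only [Set.mem_setOf_eq]
    constructor
    · rintro ⟨-, h⟩
      exact (irred_quad_iff a' α).1 h
    · intro h
      refine ⟨?_, (irred_quad_iff a' α).2 h⟩
      by_contra hne
      obtain ⟨x, hx⟩ := exists_root_of_not_gen q k hq hk F hF E hE a α hne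
      exact h x hx
  rw [hset]
  have hqle : q ≤ q ^ 2 ^ k := Nat.le_self_pow (by positivity) q
  by_cases hodd : Odd q
  · rw [if_pos hodd]
    have hoddE : Fintype.card E % 2 = 1 := by
      rw [hE]
      exact Nat.odd_iff.1 (hodd.pow)
    have h2 : (2 : E) ≠ 0 := by
      intro h2
      have hd : ringChar E ∣ 2 := (ringChar.spec E 2).1 (by exact_mod_cast h2)
      rcases (Nat.dvd_prime Nat.prime_two).1 hd with h1 | h1
      · exact CharP.ringChar_ne_one h1
      · have := FiniteField.even_card_iff_char_two.1 h1
        omega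
    have hcount := count_odd h2 a'
    rw [hE] at hcount
    omega
  · rw [if_neg hodd]
    have ha0 : a ≠ 0 := ha.resolve_left hodd
    have ha'0 : a' ≠ 0 := by
      rw [ha']
      intro h
      exact ha0 ((algebraMap F E).injective (by rw [h, map_zero]))
    have hevE : Fintype.card E % 2 = 0 := by
      rw [hE]
      have h2q : q % 2 = 0 := Nat.even_iff.1 (Nat.not_odd_iff_even.1 hodd)
      have : 2 ∣ q ^ 2 ^ k := dvd_pow (Nat.dvd_of_mod_eq_zero h2q) (by positivity)
      omega
    have h2 : (2 : E) = 0 := by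
      have hchar : ringChar E = 2 := FiniteField.even_card_iff_char_two.2 hevE
      have : ((2 : ℕ) : E) = 0 := (ringChar.spec E 2).2 (by rw [hchar])
      exact_mod_cast this
    have hcount := count_even h2 ha'0
    rw [hE] at hcount
    omega
end

section
/- Over F_2, a monic polynomial f of degree 2m is a self-reciprocal irreducible polynomial if and only if f(X+1) is irreducible and can be written in the form (1+X)^m h(X²/(1+X)) (clearing denominators) for some monic h of degree m with h(0) ≠ 0. -/
open Polynomial Finset

/-- `(1+X)^m · h(X²/(1+X))` with denominators cleared:
`∑_{j=0}^{m} a_j X^{2j} (1+X)^{m-j}` where `h = ∑ a_j Y^j`. -/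
noncomputable def tsrComp2 {F : Type*} [Field F] (m : ℕ) (h : Polynomial F) :
    Polynomial F :=
  ∑ j ∈ Finset.range (m + 1), C (h.coeff j) * X ^ (2 * j) * (1 + X) ^ (m - j)

namespace SrimAux

lemma two_eq_zero' : (2 : Polynomial (ZMod 2)) = 0 := CharTwo.two_eq_zero

noncomputable def T (m j : ℕ) : Polynomial (ZMod 2) := X ^ (m - j) * (X + 1) ^ (2 * j)

noncomputable def Sm (m : ℕ) (h : Polynomial (ZMod 2)) : Polynomial (ZMod 2) :=
  ∑ j ∈ Finset.range (m + 1), C (h.coeff j) * T m j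

lemma T_eq (m j : ℕ) : T m j = X ^ (m - j) * (X + C 1) ^ (2 * j) := by simp [T]

lemma T_monic {m j : ℕ} : (T m j).Monic := by
  rw [T_eq]; exact (monic_X_pow _).mul ((monic_X_add_C 1).pow _)

lemma T_natDegree {m j : ℕ} (hj : j ≤ m) : (T m j).natDegree = m + j := by
  rw [T_eq, natDegree_mul (monic_X_pow _).ne_zero ((monic_X_add_C 1).pow _).ne_zero,
    natDegree_X_pow, natDegree_pow, natDegree_X_add_C]
  omega

lemma comp_comp (f : Polynomial (ZMod 2)) : (f.comp (X + 1)).comp (X + 1) = f := by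
  rw [comp_assoc]
  have : ((X + 1 : Polynomial (ZMod 2)).comp (X + 1)) = X := by
    simp only [add_comp, X_comp, one_comp]
    linear_combination two_eq_zero'
  rw [this, comp_X]

lemma irr_comp_iff (f : Polynomial (ZMod 2)) :
    Irreducible (f.comp (X + 1)) ↔ Irreducible f := by
  have : (algEquivAevalXAddC (1 : ZMod 2)) f = f.comp (X + 1) := by
    simp [algEquivAevalXAddC_apply, ← comp_eq_aeval]
  rw [← this]
  exact MulEquiv.irreducible_iff _

lemma tsr_comp (m : ℕ) (h : Polynomial (ZMod 2)) :
    (tsrComp2 m h).comp (X + 1) = Sm m h := by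
  rw [tsrComp2, Sm, comp_eq_aeval, map_sum]
  refine Finset.sum_congr rfl fun j hj => ?_
  have h1 : (1 : Polynomial (ZMod 2)) + (X + 1) = X := by linear_combination two_eq_zero'
  simp only [map_mul, map_pow, map_add, aeval_X, aeval_C, map_one, algebraMap_eq, h1, T]
  ring

lemma sq_X_add_one : ((X + 1 : Polynomial (ZMod 2))) ^ 2 = X ^ 2 + 1 := by
  linear_combination X * two_eq_zero'

lemma natDegree_sq_pow (n : ℕ) : (((X : Polynomial (ZMod 2)) ^ 2 + 1) ^ n).natDegree ≤ 2 * n := by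
  have h2 : ((X : Polynomial (ZMod 2)) ^ 2 + 1).natDegree = 2 := by
    simpa using natDegree_X_pow_add_C (n := 2) (r := (1 : ZMod 2))
  calc (((X : Polynomial (ZMod 2)) ^ 2 + 1) ^ n).natDegree ≤ n * 2 := by
        rw [natDegree_pow, h2]
      _ = 2 * n := by ring

lemma reflect_sq_pow (j : ℕ) :
    reflect (2 * j) (((X : Polynomial (ZMod 2)) ^ 2 + 1) ^ j) = (X ^ 2 + 1) ^ j := by
  induction j with
  | zero => simp
  | succ n ih =>
    have hsp : (2 * (n + 1)) = 2 * n + 2 := by ring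
    have hb : reflect 2 ((X : Polynomial (ZMod 2)) ^ 2 + 1) = X ^ 2 + 1 := by
      have : ((X : Polynomial (ZMod 2)) ^ 2 + 1) = X ^ 2 + C 1 * X ^ 0 := by simp
      rw [this, reflect_add, reflect_monomial, reflect_C_mul_X_pow]
      simp [revAt_le]
      ring
    rw [hsp, pow_succ,
      reflect_mul _ _ (natDegree_sq_pow n) (by simpa using natDegree_sq_pow 1), ih, hb]

lemma reflect_T {m j : ℕ} (hj : j ≤ m) : reflect (2 * m) (T m j) = T m j := by
  have hsq : ((X + 1 : Polynomial (ZMod 2))) ^ (2 * j) = (X ^ 2 + 1) ^ j := by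
    rw [pow_mul, sq_X_add_one]
  have hsplit : 2 * m = (2 * m - 2 * j) + 2 * j := by omega
  rw [T, hsq, hsplit,
    reflect_mul _ _ (by rw [natDegree_X_pow]; omega) (natDegree_sq_pow j),
    reflect_sq_pow, reflect_monomial, revAt_le (by omega)]
  congr 2
  omega

end SrimAux

namespace Part2
open SrimAux

lemma reflect_sub (N : ℕ) (p q : Polynomial (ZMod 2)) :
    reflect N (p - q) = reflect N p - reflect N q := by
  ext i; simp [coeff_reflect]

lemma reflect_Sm {m : ℕ} (h : Polynomial (ZMod 2)) : reflect (2 * m) (Sm m h) = Sm m h := by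
  rw [Sm]
  ext i
  rw [coeff_reflect, finset_sum_coeff, finset_sum_coeff]
  refine Finset.sum_congr rfl fun j hj => ?_
  have hjm : j ≤ m := by simpa [Nat.lt_succ_iff] using Finset.mem_range.1 hj
  conv_rhs => rw [← reflect_T hjm, ← reflect_C_mul, coeff_reflect]

lemma exists_h (m : ℕ) : ∀ k, k ≤ m → ∀ p : Polynomial (ZMod 2),
    p.natDegree ≤ m + k → reflect (2 * m) p = p →
    ∃ h : Polynomial (ZMod 2), h.natDegree ≤ k ∧ p = Sm m h := by
  intro k
  induction k with
  | zero =>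
    intro _ p hdeg hrefl
    refine ⟨C (p.coeff m), le_of_eq (natDegree_C _), ?_⟩
    have hS : Sm m (C (p.coeff m)) = C (p.coeff m) * X ^ m := by
      rw [Sm, Finset.sum_eq_single 0]
      · simp [T]
      · intro j _ hj0
        rw [coeff_C, if_neg hj0]
        simp
      · simp
    rw [hS]
    ext i
    rcases lt_trichotomy i m with hlt | heq | hgt
    · have h1 : p.coeff i = p.coeff (2 * m - i) := by
        conv_lhs => rw [← hrefl]
        rw [coeff_reflect, revAt_le (by omega)]
      have h2 : p.coeff (2 * m - i) = 0 :=
        coeff_eq_zero_of_natDegree_lt (by omega)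
      rw [h1, h2, coeff_C_mul, coeff_X_pow, if_neg (by omega : ¬ i = m), mul_zero]
    · subst heq; simp [coeff_C_mul, coeff_X_pow]
    · have h2 : p.coeff i = 0 := coeff_eq_zero_of_natDegree_lt (by omega)
      rw [h2, coeff_C_mul, coeff_X_pow, if_neg (by omega : ¬ i = m), mul_zero]
  | succ k ih =>
    intro hk p hdeg hrefl
    set c := p.coeff (m + k + 1) with hc
    set p' := p - C c * T m (k + 1) with hp'
    have hTdeg : (T m (k + 1)).natDegree = m + k + 1 := T_natDegree (by omega)
    have hT1 : (T m (k + 1)).coeff (m + k + 1) = 1 := by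
      have := (T_monic (m := m) (j := k + 1)).coeff_natDegree
      rwa [hTdeg] at this
    have hp'deg : p'.natDegree ≤ m + k := by
      refine natDegree_le_iff_coeff_eq_zero.2 fun N hN => ?_
      rw [hp', coeff_sub, coeff_C_mul]
      by_cases hN1 : N = m + k + 1
      · subst hN1
        rw [hT1, mul_one, ← hc, sub_self]
      · have hb : p.coeff N = 0 := coeff_eq_zero_of_natDegree_lt (by omega)
        have hb2 : (T m (k + 1)).coeff N = 0 := coeff_eq_zero_of_natDegree_lt (by omega)
        rw [hb, hb2, mul_zero, sub_zero]
    have hp'refl : reflect (2 * m) p' = p' := by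
      rw [hp', reflect_sub, reflect_C_mul, reflect_T (by omega : k + 1 ≤ m), hrefl]
    obtain ⟨h', hh'deg, hh'⟩ := ih (by omega) p' hp'deg hp'refl
    refine ⟨h' + C c * X ^ (k + 1), ?_, ?_⟩
    · refine le_trans (natDegree_add_le _ _) (max_le (by omega) ?_)
      exact le_trans (natDegree_C_mul_le _ _) (le_of_eq (natDegree_X_pow _))
    · have hSadd : Sm m (h' + C c * X ^ (k + 1)) = Sm m h' + Sm m (C c * X ^ (k + 1)) := by
        rw [Sm, Sm, Sm, ← Finset.sum_add_distrib]
        refine Finset.sum_congr rfl fun j _ => ?_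
        rw [coeff_add, C_add, add_mul]
      have hSmono : Sm m (C c * X ^ (k + 1)) = C c * T m (k + 1) := by
        rw [Sm, Finset.sum_eq_single (k + 1)]
        · simp [coeff_C_mul, coeff_X_pow]
        · intro j _ hj0
          simp [coeff_C_mul, coeff_X_pow, hj0]
        · intro hnot; exact absurd (Finset.mem_range.2 (by omega)) hnot
      rw [hSadd, hSmono, ← hh', hp']
      ring

lemma coeff_top (m : ℕ) (h : Polynomial (ZMod 2)) :
    (Sm m h).coeff (2 * m) = h.coeff m := by
  rw [Sm, finset_sum_coeff, Finset.sum_eq_single m]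
  · rw [coeff_C_mul]
    have hmon := (T_monic (m := m) (j := m)).coeff_natDegree
    rw [T_natDegree le_rfl] at hmon
    rw [show m + m = 2 * m by ring] at hmon
    rw [hmon, mul_one]
  · intro j hj hj0
    have hjm : j ≤ m := by simpa [Nat.lt_succ_iff] using Finset.mem_range.1 hj
    rw [coeff_C_mul,
      coeff_eq_zero_of_natDegree_lt (show (T m j).natDegree < 2 * m by rw [T_natDegree hjm]; omega),
      mul_zero]
  · intro hnot; exact absurd (Finset.mem_range.2 (by omega)) hnot

lemma eval_one_Sm (m : ℕ) (h : Polynomial (ZMod 2)) :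
    (Sm m h).eval 1 = h.coeff 0 := by
  rw [Sm, eval_finset_sum, Finset.sum_eq_single 0]
  · simp [T]
  · intro j _ hj0
    have : ((1 : ZMod 2) + 1) = 0 := by decide
    simp [T, eval_mul, eval_pow, this, zero_pow (by omega : 2 * j ≠ 0), hj0]
  · simp

lemma eval_one_ne_zero {f : Polynomial (ZMod 2)} (hirr : Irreducible f)
    (hdeg : 1 < f.natDegree) : f.eval 1 ≠ 0 := by
  intro h0
  obtain ⟨q, hq⟩ := dvd_iff_isRoot.2 h0
  rcases hirr.isUnit_or_isUnit hq with hu | hu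
  · exact Polynomial.not_isUnit_X_sub_C _ hu
  · have hq0 : q ≠ 0 := hu.ne_zero
    have : f.natDegree = 1 := by
      rw [hq, natDegree_mul (X_sub_C_ne_zero 1) hq0, natDegree_X_sub_C,
        natDegree_eq_zero_of_isUnit hu]
    omega

end Part2

/-- Over `F_2`, a monic polynomial `f` of degree `2m` is self-reciprocal irreducible if
and only if `f(X+1)` is irreducible and of the form `(1+X)^m h(X²/(1+X))` for some monic
`h` of degree `m` with `h(0) ≠ 0`. -/
theorem srim_iff_comp_decomposable
    (m : ℕ) (hm : 0 < m) (f : Polynomial (ZMod 2))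
    (hmonic : f.Monic) (hdeg : f.natDegree = 2 * m) :
    (Irreducible f ∧ f.reverse = f) ↔
      (Irreducible (f.comp (X + 1)) ∧
        ∃ h : Polynomial (ZMod 2), h.Monic ∧ h.natDegree = m ∧ h.coeff 0 ≠ 0 ∧
          f.comp (X + 1) = tsrComp2 m h) := by
  open SrimAux Part2 in
  have hrev_eq : f.reverse = reflect (2 * m) f := by rw [Polynomial.reverse, hdeg]
  constructor
  · rintro ⟨hirr, hrev⟩
    refine ⟨(irr_comp_iff f).2 hirr, ?_⟩
    have hrefl : reflect (2 * m) f = f := by rw [← hrev_eq]; exact hrev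
    obtain ⟨h, hhd, hfS⟩ := exists_h m m le_rfl f (by omega) hrefl
    have hcm : h.coeff m = 1 := by
      rw [← coeff_top m h, ← hfS, ← hdeg, hmonic.coeff_natDegree]
    have hdegh : h.natDegree = m :=
      le_antisymm hhd (le_natDegree_of_ne_zero (by rw [hcm]; exact one_ne_zero))
    have hmon : h.Monic := by
      rw [Monic, leadingCoeff, hdegh, hcm]
    have h0 : h.coeff 0 ≠ 0 := by
      rw [← eval_one_Sm m h, ← hfS]
      exact eval_one_ne_zero hirr (by omega)
    refine ⟨h, hmon, hdegh, h0, ?_⟩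
    rw [hfS, ← tsr_comp, comp_comp]
  · rintro ⟨hirrc, h, _, _, _, hcomp⟩
    have hf : f = Sm m h := by rw [← comp_comp f, hcomp, tsr_comp]
    refine ⟨(irr_comp_iff f).1 hirrc, ?_⟩
    rw [hrev_eq]
    calc reflect (2 * m) f = reflect (2 * m) (Sm m h) := by rw [← hf]
      _ = Sm m h := reflect_Sm h
      _ = f := hf.symm
end
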